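/- arXiv:2311.00528 — 5 statements merged into one kernel-verified Lean document; each statement's English description precedes it below -/
import Mathlib

section
/- Under consistency (Y = A·Y(1) + (1−A)·Y(0)), unconfoundedness in the source population (A ⟂ (Y(0),Y(1)) | X, G=1), positivity of the source propensity score, transportability (G ⟂ (Y(0),Y(1)) | X), and positivity of the sampling score, the target-population average treatment effect τ = E[Y(1) − Y(0) | G=0] equals E[μ1(X) − μ0(X) | G=0], where μa(x) = E[Y | X=x, A=a, G=1]. -/
open MeasureTheory ProbabilityTheory Filter Topology

def mX {Ω : Type*} (X : Ω → ℝ) : MeasurableSpace Ω :=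
  MeasurableSpace.comap X inferInstance

noncomputable def trunc (n : ℕ) (y : ℝ) : ℝ := max (-(n : ℝ)) (min (n : ℝ) y)

lemma trunc_meas (n : ℕ) : Measurable (trunc n) :=
  measurable_const.max (measurable_const.min measurable_id)

lemma trunc_abs_le (n : ℕ) (y : ℝ) : |trunc n y| ≤ |y| := by
  rw [abs_le]
  constructor
  · rcases le_or_gt 0 y with hy | hy
    · have h1 : (0 : ℝ) ≤ min (n : ℝ) y := le_min (Nat.cast_nonneg n) hy
      have h2 : -|y| ≤ (0 : ℝ) := neg_nonpos.2 (abs_nonneg y)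
      exact le_trans (h2.trans h1) (le_max_right _ _)
    · have h1 : min (n : ℝ) y = y := min_eq_right (hy.le.trans (Nat.cast_nonneg n))
      rw [trunc, h1, abs_of_neg hy, neg_neg]
      exact le_max_right _ _
  · exact max_le (le_trans (neg_nonpos.2 (Nat.cast_nonneg n)) (abs_nonneg y))
      (le_trans (min_le_right _ _) (le_abs_self y))

lemma trunc_abs_le_nat (n : ℕ) (y : ℝ) : |trunc n y| ≤ (n : ℝ) := by
  rw [abs_le]
  exact ⟨le_max_left _ _, max_le (neg_le_self (Nat.cast_nonneg n))
    (min_le_left _ _)⟩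

lemma tendsto_trunc (y : ℝ) : Tendsto (fun n => trunc n y) atTop (𝓝 y) := by
  apply tendsto_atTop_of_eventually_const (i₀ := ⌈|y|⌉₊)
  intro n hn
  have h : |y| ≤ (n : ℝ) := le_trans (Nat.le_ceil _) (Nat.cast_le.2 hn)
  rw [trunc, min_eq_right ((le_abs_self y).trans h),
    max_eq_right ((neg_le_neg h).trans (neg_abs_le y))]

theorem target_ate_identification
    {Ω : Type*} [MeasurableSpace Ω] (P : Measure Ω) [IsProbabilityMeasure P]
    (X A G Y0 Y1 Y : Ω → ℝ)
    (hX : Measurable X) (hA : Measurable A) (hG : Measurable G)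
    (hY0m : Measurable Y0) (hY1m : Measurable Y1)
    (hY0 : Integrable Y0 P) (hY1 : Integrable Y1 P)
    (hAbin : ∀ ω, A ω = 0 ∨ A ω = 1) (hGbin : ∀ ω, G ω = 0 ∨ G ω = 1)
    (hcons : ∀ ω, Y ω = A ω * Y1 ω + (1 - A ω) * Y0 ω)
    (e1 π μ0 μ1 : ℝ → ℝ)
    (he1m : Measurable e1) (hπm : Measurable π)
    (hμ0m : Measurable μ0) (hμ1m : Measurable μ1)
    (hπ : (fun ω => π (X ω)) =ᵐ[P] P[G | mX X])
    (he1 : (fun ω => e1 (X ω) * π (X ω)) =ᵐ[P] P[fun ω => A ω * G ω | mX X])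
    (hpose : ∀ᵐ ω ∂P, 0 < e1 (X ω) ∧ e1 (X ω) < 1)
    (hposπ : ∀ᵐ ω ∂P, 0 < π (X ω) ∧ π (X ω) < 1)
    (hunconf : ∀ f : ℝ × ℝ → ℝ, Measurable f → (∃ C, ∀ p, |f p| ≤ C) →
      P[fun ω => G ω * A ω * f (Y0 ω, Y1 ω) | mX X]
        =ᵐ[P] fun ω => e1 (X ω) * (P[fun ω => G ω * f (Y0 ω, Y1 ω) | mX X]) ω)
    (htrans : ∀ f : ℝ × ℝ → ℝ, Measurable f → (∃ C, ∀ p, |f p| ≤ C) →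
      P[fun ω => G ω * f (Y0 ω, Y1 ω) | mX X]
        =ᵐ[P] fun ω => π (X ω) * (P[fun ω => f (Y0 ω, Y1 ω) | mX X]) ω)
    (hμ1 : (fun ω => μ1 (X ω) * e1 (X ω) * π (X ω)) =ᵐ[P]
      P[fun ω => A ω * G ω * Y ω | mX X])
    (hμ0 : (fun ω => μ0 (X ω) * (1 - e1 (X ω)) * π (X ω)) =ᵐ[P]
      P[fun ω => (1 - A ω) * G ω * Y ω | mX X])
    (hμint : Integrable (fun ω => μ1 (X ω) - μ0 (X ω)) P) :
    ∫ ω, (1 - G ω) * (Y1 ω - Y0 ω) ∂P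
      = ∫ ω, (1 - G ω) * (μ1 (X ω) - μ0 (X ω)) ∂P := by
  have hmle : mX X ≤ ‹MeasurableSpace Ω› := hX.comap_le
  haveI : SigmaFinite (P.trim hmle) := inferInstance
  have hXm : Measurable[mX X] X := Measurable.of_comap_le le_rfl
  have hcm : ∀ {g : ℝ → ℝ}, Measurable g → Measurable[mX X] (fun ω => g (X ω)) :=
    fun hg => hg.comp hXm
  have hGabs : ∀ ω, |G ω| ≤ 1 := by
    intro ω; rcases hGbin ω with h | h <;> simp [h]
  have hAabs : ∀ ω, |A ω| ≤ 1 := by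
    intro ω; rcases hAbin ω with h | h <;> simp [h]
  have hbint : ∀ (g : Ω → ℝ) (C : ℝ), Measurable g → (∀ ω, |g ω| ≤ C) →
      Integrable g P := fun g C hgm hgb =>
    (integrable_const C).mono' hgm.aestronglyMeasurable
      (ae_of_all _ fun ω => by simpa [Real.norm_eq_abs] using hgb ω)
  -- the key truncation lemma
  have key : ∀ (U : Ω → ℝ), Measurable U → (∀ ω, |U ω| ≤ 1) →
      ∀ (c : ℝ → ℝ), Measurable c → (∀ᵐ ω ∂P, |c (X ω)| ≤ 1) →
      ∀ (φ : ℝ × ℝ → ℝ), Measurable φ → Integrable (fun ω => φ (Y0 ω, Y1 ω)) P →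
      (∀ f : ℝ × ℝ → ℝ, Measurable f → (∃ C, ∀ p, |f p| ≤ C) →
        P[fun ω => U ω * f (Y0 ω, Y1 ω) | mX X] =ᵐ[P]
          fun ω => c (X ω) * (P[fun ω => f (Y0 ω, Y1 ω) | mX X]) ω) →
      (fun ω => c (X ω) * (P[fun ω => φ (Y0 ω, Y1 ω) | mX X]) ω) =ᵐ[P]
        P[fun ω => U ω * φ (Y0 ω, Y1 ω) | mX X] := by
    intro U hUm hU1 c hcmeas hc1 φ hφm hφint hstep
    have hc1' : ∀ᵐ ω ∂P, ‖c (X ω)‖ ≤ 1 := by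
      filter_upwards [hc1] with ω h; simpa [Real.norm_eq_abs] using h
    have hφY : Measurable (fun ω => φ (Y0 ω, Y1 ω)) := hφm.comp (hY0m.prodMk hY1m)
    have hUφint : Integrable (fun ω => U ω * φ (Y0 ω, Y1 ω)) P :=
      hφint.bdd_mul (c := 1) hUm.aestronglyMeasurable
        (ae_of_all _ fun ω => by simpa [Real.norm_eq_abs] using hU1 ω)
    have hcφint : Integrable (fun ω => c (X ω) * φ (Y0 ω, Y1 ω)) P :=
      hφint.bdd_mul ((hcmeas.comp hX).aestronglyMeasurable) hc1'
    have hpull : P[fun ω => c (X ω) * φ (Y0 ω, Y1 ω) | mX X] =ᵐ[P]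
        fun ω => c (X ω) * (P[fun ω => φ (Y0 ω, Y1 ω) | mX X]) ω := by
      have h := condExp_stronglyMeasurable_mul_of_bound hmle
        (Measurable.stronglyMeasurable (hcm hcmeas)) hφint 1 hc1'
      filter_upwards [h] with ω hω
      exact hω
    have hset : ∀ s : Set Ω, MeasurableSet[mX X] s →
        ∫ ω in s, c (X ω) * φ (Y0 ω, Y1 ω) ∂P
          = ∫ ω in s, U ω * φ (Y0 ω, Y1 ω) ∂P := by
      intro s hs
      have hsΩ : MeasurableSet s := hmle s hs
      have hn : ∀ n : ℕ, ∫ ω in s, c (X ω) * trunc n (φ (Y0 ω, Y1 ω)) ∂P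
          = ∫ ω in s, U ω * trunc n (φ (Y0 ω, Y1 ω)) ∂P := by
        intro n
        have hfm : Measurable (fun p : ℝ × ℝ => trunc n (φ p)) := (trunc_meas n).comp hφm
        have hfb : ∃ C, ∀ p : ℝ × ℝ, |trunc n (φ p)| ≤ C :=
          ⟨n, fun p => trunc_abs_le_nat n (φ p)⟩
        have hfY : Measurable (fun ω => trunc n (φ (Y0 ω, Y1 ω))) :=
          hfm.comp (hY0m.prodMk hY1m)
        have hfint : Integrable (fun ω => trunc n (φ (Y0 ω, Y1 ω))) P :=
          hbint _ n hfY (fun ω => trunc_abs_le_nat n _)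
        have hUfint : Integrable (fun ω => U ω * trunc n (φ (Y0 ω, Y1 ω))) P :=
          hfint.bdd_mul (c := 1) hUm.aestronglyMeasurable
            (ae_of_all _ fun ω => by simpa [Real.norm_eq_abs] using hU1 ω)
        have hcfint : Integrable (fun ω => c (X ω) * trunc n (φ (Y0 ω, Y1 ω))) P :=
          hfint.bdd_mul ((hcmeas.comp hX).aestronglyMeasurable) hc1'
        have hpull' : P[fun ω => c (X ω) * trunc n (φ (Y0 ω, Y1 ω)) | mX X] =ᵐ[P]
            fun ω => c (X ω) * (P[fun ω => trunc n (φ (Y0 ω, Y1 ω)) | mX X]) ω := by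
          have h := condExp_stronglyMeasurable_mul_of_bound hmle
            (Measurable.stronglyMeasurable (hcm hcmeas)) hfint 1 hc1'
          filter_upwards [h] with ω hω
          exact hω
        have h2 : P[fun ω => c (X ω) * trunc n (φ (Y0 ω, Y1 ω)) | mX X] =ᵐ[P]
            P[fun ω => U ω * trunc n (φ (Y0 ω, Y1 ω)) | mX X] :=
          hpull'.trans (hstep _ hfm hfb).symm
        rw [← setIntegral_condExp hmle hcfint hs,
          setIntegral_congr_ae hsΩ (h2.mono fun ω h _ => h),
          setIntegral_condExp hmle hUfint hs]
      have hdom : Integrable (fun ω => |φ (Y0 ω, Y1 ω)|) (P.restrict s) := by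
        have := hφint.norm.restrict (s := s)
        simpa [Real.norm_eq_abs] using this
      have hL : Tendsto (fun n : ℕ => ∫ ω in s, U ω * trunc n (φ (Y0 ω, Y1 ω)) ∂P)
          atTop (𝓝 (∫ ω in s, U ω * φ (Y0 ω, Y1 ω) ∂P)) := by
        apply tendsto_integral_of_dominated_convergence (fun ω => |φ (Y0 ω, Y1 ω)|)
        · intro n
          exact (hUm.mul ((trunc_meas n).comp hφY)).aestronglyMeasurable
        · exact hdom
        · intro n
          apply ae_of_all
          intro ω
          rw [Real.norm_eq_abs, abs_mul]
          calc |U ω| * |trunc n (φ (Y0 ω, Y1 ω))| ≤ 1 * |φ (Y0 ω, Y1 ω)| :=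
                mul_le_mul (hU1 ω) (trunc_abs_le n _) (abs_nonneg _) zero_le_one
            _ = |φ (Y0 ω, Y1 ω)| := one_mul _
        · exact ae_of_all _ fun ω => (tendsto_trunc (φ (Y0 ω, Y1 ω))).const_mul (U ω)
      have hR : Tendsto (fun n : ℕ => ∫ ω in s, c (X ω) * trunc n (φ (Y0 ω, Y1 ω)) ∂P)
          atTop (𝓝 (∫ ω in s, c (X ω) * φ (Y0 ω, Y1 ω) ∂P)) := by
        apply tendsto_integral_of_dominated_convergence (fun ω => |φ (Y0 ω, Y1 ω)|)
        · intro n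
          exact ((hcmeas.comp hX).mul ((trunc_meas n).comp hφY)).aestronglyMeasurable
        · exact hdom
        · intro n
          apply ae_restrict_of_ae
          filter_upwards [hc1] with ω hω
          rw [Real.norm_eq_abs, abs_mul]
          calc |c (X ω)| * |trunc n (φ (Y0 ω, Y1 ω))| ≤ 1 * |φ (Y0 ω, Y1 ω)| :=
                mul_le_mul hω (trunc_abs_le n _) (abs_nonneg _) zero_le_one
            _ = |φ (Y0 ω, Y1 ω)| := one_mul _
        · exact ae_of_all _ fun ω => (tendsto_trunc (φ (Y0 ω, Y1 ω))).const_mul (c (X ω))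
      have hR' : Tendsto (fun n : ℕ => ∫ ω in s, U ω * trunc n (φ (Y0 ω, Y1 ω)) ∂P)
          atTop (𝓝 (∫ ω in s, c (X ω) * φ (Y0 ω, Y1 ω) ∂P)) := by
        simpa only [hn] using hR
      exact tendsto_nhds_unique hR' hL
    refine ae_eq_condExp_of_forall_setIntegral_eq hmle hUφint
      (fun s hs _ => ?_) (fun s hs _ => ?_) ?_
    · exact (integrable_condExp.bdd_mul ((hcmeas.comp hX).aestronglyMeasurable)
        hc1').integrableOn
    · calc ∫ ω in s, c (X ω) * (P[fun ω => φ (Y0 ω, Y1 ω) | mX X]) ω ∂P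
          = ∫ ω in s, (P[fun ω => c (X ω) * φ (Y0 ω, Y1 ω) | mX X]) ω ∂P :=
            setIntegral_congr_ae (hmle s hs) (hpull.symm.mono fun ω h _ => h)
        _ = ∫ ω in s, c (X ω) * φ (Y0 ω, Y1 ω) ∂P := setIntegral_condExp hmle hcφint hs
        _ = ∫ ω in s, U ω * φ (Y0 ω, Y1 ω) ∂P := hset s hs
    · exact ((hcm hcmeas).stronglyMeasurable.mul
        stronglyMeasurable_condExp).aestronglyMeasurable
  -- instantiations
  have hGA1 : ∀ ω, |G ω * A ω| ≤ 1 := fun ω => by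
    rw [abs_mul]
    calc |G ω| * |A ω| ≤ 1 * 1 := mul_le_mul (hGabs ω) (hAabs ω) (abs_nonneg _) zero_le_one
      _ = 1 := one_mul 1
  have hA1G1 : ∀ ω, |(1 - A ω) * G ω| ≤ 1 := fun ω => by
    rcases hAbin ω with h | h <;> rcases hGbin ω with h' | h' <;> simp [h, h']
  have hbound1 : ∀ᵐ ω ∂P, |e1 (X ω) * π (X ω)| ≤ 1 := by
    filter_upwards [hpose, hposπ] with ω h1 h2
    rw [abs_of_pos (mul_pos h1.1 h2.1)]
    nlinarith [h1.1, h1.2, h2.1, h2.2]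
  have hbound0 : ∀ᵐ ω ∂P, |(1 - e1 (X ω)) * π (X ω)| ≤ 1 := by
    filter_upwards [hpose, hposπ] with ω h1 h2
    rw [abs_of_pos (mul_pos (by linarith [h1.2]) h2.1)]
    nlinarith [h1.1, h1.2, h2.1, h2.2]
  have hboundπ : ∀ᵐ ω ∂P, |π (X ω)| ≤ 1 := by
    filter_upwards [hposπ] with ω h2
    rw [abs_of_pos h2.1]; linarith [h2.2]
  have K1 : (fun ω => e1 (X ω) * π (X ω) * (P[Y1 | mX X]) ω) =ᵐ[P]
      P[fun ω => G ω * A ω * Y1 ω | mX X] := by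
    apply key (fun ω => G ω * A ω) (hG.mul hA) hGA1
      (fun x => e1 x * π x) (he1m.mul hπm) hbound1
      (fun p => p.2) measurable_snd hY1
    intro f hf hfb
    filter_upwards [hunconf f hf hfb, htrans f hf hfb] with ω h1 h2
    rw [h1, h2]; ring
  have K0 : (fun ω => (1 - e1 (X ω)) * π (X ω) * (P[Y0 | mX X]) ω) =ᵐ[P]
      P[fun ω => (1 - A ω) * G ω * Y0 ω | mX X] := by
    apply key (fun ω => (1 - A ω) * G ω) ((measurable_const.sub hA).mul hG) hA1G1
      (fun x => (1 - e1 x) * π x) ((measurable_const.sub he1m).mul hπm) hbound0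
      (fun p => p.1) measurable_fst hY0
    intro f hf hfb
    have hfY : Measurable (fun ω => f (Y0 ω, Y1 ω)) := hf.comp (hY0m.prodMk hY1m)
    obtain ⟨C, hC⟩ := hfb
    have hGf_int : Integrable (fun ω => G ω * f (Y0 ω, Y1 ω)) P := by
      apply hbint (fun ω => G ω * f (Y0 ω, Y1 ω)) C (hG.mul hfY)
      intro ω
      rw [abs_mul]
      calc |G ω| * |f (Y0 ω, Y1 ω)| ≤ 1 * C :=
            mul_le_mul (hGabs ω) (hC _) (abs_nonneg _) zero_le_one
        _ = C := one_mul C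
    have hGAf_int : Integrable (fun ω => G ω * A ω * f (Y0 ω, Y1 ω)) P := by
      apply hbint (fun ω => G ω * A ω * f (Y0 ω, Y1 ω)) C ((hG.mul hA).mul hfY)
      intro ω
      rw [abs_mul]
      calc |G ω * A ω| * |f (Y0 ω, Y1 ω)| ≤ 1 * C :=
            mul_le_mul (hGA1 ω) (hC _) (abs_nonneg _) zero_le_one
        _ = C := one_mul C
    calc P[fun ω => (1 - A ω) * G ω * f (Y0 ω, Y1 ω) | mX X]
        =ᵐ[P] P[(fun ω => G ω * f (Y0 ω, Y1 ω)) - fun ω => G ω * A ω * f (Y0 ω, Y1 ω) | mX X] :=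
          condExp_congr_ae (ae_of_all _ fun ω => by
            simp only [Pi.sub_apply]; ring)
      _ =ᵐ[P] P[fun ω => G ω * f (Y0 ω, Y1 ω) | mX X]
            - P[fun ω => G ω * A ω * f (Y0 ω, Y1 ω) | mX X] := condExp_sub hGf_int hGAf_int (mX X)
      _ =ᵐ[P] fun ω => (1 - e1 (X ω)) * π (X ω) * (P[fun ω => f (Y0 ω, Y1 ω) | mX X]) ω := by
          filter_upwards [hunconf f hf ⟨C, hC⟩, htrans f hf ⟨C, hC⟩] with ω h1 h2
          simp only [Pi.sub_apply]
          rw [h1, h2]; ring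
  have KB : (fun ω => π (X ω) * (P[fun ω => Y1 ω - Y0 ω | mX X]) ω) =ᵐ[P]
      P[fun ω => G ω * (Y1 ω - Y0 ω) | mX X] := by
    apply key G hG hGabs π hπm hboundπ (fun p => p.2 - p.1)
      (measurable_snd.sub measurable_fst) (hY1.sub hY0)
    intro f hf hfb
    exact htrans f hf hfb
  -- identify μ1, μ0 with conditional expectations
  have hYeq1 : ∀ ω, A ω * G ω * Y ω = G ω * A ω * Y1 ω := by
    intro ω
    rcases hAbin ω with h | h <;> simp only [hcons ω, h] <;> ring
  have hYeq0 : ∀ ω, (1 - A ω) * G ω * Y ω = (1 - A ω) * G ω * Y0 ω := by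
    intro ω
    rcases hAbin ω with h | h <;> simp only [hcons ω, h] <;> ring
  have hCE1 : P[fun ω => A ω * G ω * Y ω | mX X]
      =ᵐ[P] P[fun ω => G ω * A ω * Y1 ω | mX X] :=
    condExp_congr_ae (ae_of_all _ hYeq1)
  have hCE0 : P[fun ω => (1 - A ω) * G ω * Y ω | mX X]
      =ᵐ[P] P[fun ω => (1 - A ω) * G ω * Y0 ω | mX X] :=
    condExp_congr_ae (ae_of_all _ hYeq0)
  have hm1 : (fun ω => μ1 (X ω)) =ᵐ[P] P[Y1 | mX X] := by
    filter_upwards [hμ1, K1, hCE1, hpose, hposπ] with ω h1 h2 h3 h4 h5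
    have hne : e1 (X ω) * π (X ω) ≠ 0 := (mul_pos h4.1 h5.1).ne'
    have heq : e1 (X ω) * π (X ω) * μ1 (X ω)
        = e1 (X ω) * π (X ω) * (P[Y1 | mX X]) ω := by
      linear_combination h1 + h3 - h2
    exact mul_left_cancel₀ hne heq
  have hm0 : (fun ω => μ0 (X ω)) =ᵐ[P] P[Y0 | mX X] := by
    filter_upwards [hμ0, K0, hCE0, hpose, hposπ] with ω h1 h2 h3 h4 h5
    have hne : (1 - e1 (X ω)) * π (X ω) ≠ 0 := (mul_pos (by linarith [h4.2]) h5.1).ne'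
    have heq : (1 - e1 (X ω)) * π (X ω) * μ0 (X ω)
        = (1 - e1 (X ω)) * π (X ω) * (P[Y0 | mX X]) ω := by
      linear_combination h1 + h3 - h2
    exact mul_left_cancel₀ hne heq
  -- final computation
  have hDint : Integrable (fun ω => Y1 ω - Y0 ω) P := hY1.sub hY0
  have hGD_int : Integrable (fun ω => G ω * (Y1 ω - Y0 ω)) P :=
    hDint.bdd_mul (c := 1) hG.aestronglyMeasurable
      (ae_of_all _ fun ω => by simpa [Real.norm_eq_abs] using hGabs ω)
  have h1Gabs : ∀ ω, |1 - G ω| ≤ 1 := by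
    intro ω; rcases hGbin ω with h | h <;> simp [h]
  have hGint : Integrable G P := hbint G 1 hG hGabs
  have hsplit : P[fun ω => (1 - G ω) * (Y1 ω - Y0 ω) | mX X] =ᵐ[P]
      fun ω => (P[fun ω => Y1 ω - Y0 ω | mX X]) ω
        - (P[fun ω => G ω * (Y1 ω - Y0 ω) | mX X]) ω := by
    calc P[fun ω => (1 - G ω) * (Y1 ω - Y0 ω) | mX X]
        =ᵐ[P] P[(fun ω => Y1 ω - Y0 ω) - fun ω => G ω * (Y1 ω - Y0 ω) | mX X] :=
          condExp_congr_ae (ae_of_all _ fun ω => by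
            simp only [Pi.sub_apply]; ring)
      _ =ᵐ[P] P[fun ω => Y1 ω - Y0 ω | mX X]
            - P[fun ω => G ω * (Y1 ω - Y0 ω) | mX X] := condExp_sub hDint hGD_int (mX X)
      _ =ᵐ[P] fun ω => (P[fun ω => Y1 ω - Y0 ω | mX X]) ω
            - (P[fun ω => G ω * (Y1 ω - Y0 ω) | mX X]) ω :=
          ae_of_all _ fun ω => by simp only [Pi.sub_apply]
  have hsubD : P[fun ω => Y1 ω - Y0 ω | mX X] =ᵐ[P] P[Y1 | mX X] - P[Y0 | mX X] :=
    condExp_sub hY1 hY0 (mX X)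
  have hCE_LHS : P[fun ω => (1 - G ω) * (Y1 ω - Y0 ω) | mX X] =ᵐ[P]
      fun ω => (1 - π (X ω)) * (μ1 (X ω) - μ0 (X ω)) := by
    filter_upwards [hsplit, KB, hsubD, hm1, hm0] with ω h1 h2 h3 h4 h5
    have h3' : (P[fun ω => Y1 ω - Y0 ω | mX X]) ω = μ1 (X ω) - μ0 (X ω) := by
      rw [h3]; simp only [Pi.sub_apply]; rw [← h4, ← h5]
    rw [h1, ← h2, h3']
    ring
  -- RHS
  have hμXm : Measurable[mX X] (fun ω => μ1 (X ω) - μ0 (X ω)) :=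
    (hcm hμ1m).sub (hcm hμ0m)
  have h1G_int : Integrable (fun ω => 1 - G ω) P := (integrable_const 1).sub hGint
  have hfg_int : Integrable (fun ω => (μ1 (X ω) - μ0 (X ω)) * (1 - G ω)) P := by
    have h := hμint.bdd_mul ((measurable_const.sub hG).aestronglyMeasurable)
      (ae_of_all _ fun ω => by simpa [Real.norm_eq_abs] using h1Gabs ω)
    exact h.congr (ae_of_all _ fun ω => by simp only [Pi.sub_apply]; ring)
  have hpullR : P[(fun ω => μ1 (X ω) - μ0 (X ω)) * fun ω => 1 - G ω | mX X] =ᵐ[P]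
      (fun ω => μ1 (X ω) - μ0 (X ω)) * P[fun ω => 1 - G ω | mX X] :=
    condExp_mul_of_stronglyMeasurable_left hμXm.stronglyMeasurable
      (by exact hfg_int) h1G_int
  have hπ1 : P[fun ω => 1 - G ω | mX X] =ᵐ[P] fun ω => 1 - π (X ω) := by
    have hs : P[(fun _ : Ω => (1 : ℝ)) - G | mX X] =ᵐ[P]
        P[fun _ : Ω => (1 : ℝ) | mX X] - P[G | mX X] :=
      condExp_sub (integrable_const 1) hGint (mX X)
    filter_upwards [hs, hπ] with ω h1 h2
    have : P[fun ω => 1 - G ω | mX X] = P[(fun _ : Ω => (1 : ℝ)) - G | mX X] := rfl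
    rw [this, h1]
    simp only [Pi.sub_apply, condExp_const hmle]
    rw [← h2]
  have hCE_RHS : P[fun ω => (1 - G ω) * (μ1 (X ω) - μ0 (X ω)) | mX X] =ᵐ[P]
      fun ω => (1 - π (X ω)) * (μ1 (X ω) - μ0 (X ω)) := by
    have hcongr : P[fun ω => (1 - G ω) * (μ1 (X ω) - μ0 (X ω)) | mX X] =ᵐ[P]
        P[(fun ω => μ1 (X ω) - μ0 (X ω)) * fun ω => 1 - G ω | mX X] :=
      condExp_congr_ae (ae_of_all _ fun ω => by simp only [Pi.mul_apply]; ring)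
    filter_upwards [hcongr, hpullR, hπ1] with ω h1 h2 h3
    rw [h1, h2]
    simp only [Pi.mul_apply]
    rw [h3]
    ring
  rw [← integral_condExp hmle (f := fun ω => (1 - G ω) * (Y1 ω - Y0 ω)),
    ← integral_condExp hmle (f := fun ω => (1 - G ω) * (μ1 (X ω) - μ0 (X ω)))]
  exact integral_congr_ae (hCE_LHS.trans hCE_RHS.symm)
end

section
/- The efficient influence function φ_I for the target-population ATE has mean zero: E[ (G/(1−q))·((1−π(X))/π(X))·( A(Y−μ1(X))/e1(X) − (1−A)(Y−μ0(X))/(1−e1(X)) ) + ((1−G)/(1−q))·(μ1(X) − μ0(X) − τ) ] = 0, under the identifying assumptions. -/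
open MeasureTheory ProbabilityTheory

open MeasureTheory Filter
open scoped ENNReal NNReal

lemma key_ext {Ω : Type*} [inst : MeasurableSpace Ω] (P : Measure Ω) [IsProbabilityMeasure P]
    (Y0 Y1 : Ω → ℝ) (hY0m : Measurable Y0) (hY1m : Measurable Y1)
    (B B2 ρ : Ω → ℝ) (hBm : Measurable B) (hB2m : Measurable B2) (hρm : Measurable ρ)
    (hBbd : ∀ ω, |B ω| ≤ 1) (hB2bd : ∀ ω, |B2 ω| ≤ 1)
    (hρbd : ∀ᵐ ω ∂P, |ρ ω| ≤ 1)
    {m : MeasurableSpace Ω} (hm : m ≤ inst)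
    (h : ∀ f : ℝ × ℝ → ℝ, Measurable f → (∃ C, ∀ p, |f p| ≤ C) →
      P[fun ω => B ω * f (Y0 ω, Y1 ω) | m]
        =ᵐ[P] fun ω => ρ ω * (P[fun ω => B2 ω * f (Y0 ω, Y1 ω) | m]) ω)
    (g : ℝ × ℝ → ℝ) (hg : Measurable g)
    (hgi : Integrable (fun ω => g (Y0 ω, Y1 ω)) P) :
    P[fun ω => B ω * g (Y0 ω, Y1 ω) | m]
      =ᵐ[P] fun ω => ρ ω * (P[fun ω => B2 ω * g (Y0 ω, Y1 ω) | m]) ω := by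
  classical
  set Z : Ω → ℝ := fun ω => g (Y0 ω, Y1 ω) with hZ
  have hZm : Measurable[inst] Z := hg.comp (hY0m.prodMk hY1m)
  set F : ℕ → ℝ × ℝ → ℝ := fun n p => if |g p| ≤ (n : ℝ) then g p else 0 with hF
  have hFm : ∀ n, Measurable (F n) := by
    intro n
    exact Measurable.ite (measurableSet_le hg.abs measurable_const) hg measurable_const
  have hFbd : ∀ n, ∃ C, ∀ p, |F n p| ≤ C := by
    intro n
    refine ⟨n, fun p => ?_⟩
    by_cases hp : |g p| ≤ (n : ℝ)
    · simpa [hF, hp] using hp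
    · simp only [hF, hp, if_false]
      simpa using n.cast_nonneg
  have hFabs : ∀ n p, |F n p| ≤ |g p| := by
    intro n p
    by_cases hp : |g p| ≤ (n : ℝ) <;> simp [hF, hp, abs_nonneg]
  set Zn : ℕ → Ω → ℝ := fun n ω => F n (Y0 ω, Y1 ω) with hZn
  have hZnm : ∀ n, Measurable[inst] (Zn n) := fun n => (hFm n).comp (hY0m.prodMk hY1m)
  have hZni : ∀ n, Integrable (Zn n) P := by
    intro n
    exact hgi.mono ((hZnm n).aestronglyMeasurable)
      (Filter.Eventually.of_forall fun ω => by
        simpa [Real.norm_eq_abs] using hFabs n (Y0 ω, Y1 ω))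
  have hmul : ∀ (b v : Ω → ℝ), Measurable[inst] b → (∀ ω, |b ω| ≤ 1) → Measurable[inst] v →
      Integrable v P → Integrable (fun ω => b ω * v ω) P := by
    intro b v hb hbbd hv hvi
    exact hvi.mono ((hb.mul hv).aestronglyMeasurable)
      (Filter.Eventually.of_forall fun ω => by
        simp only [Real.norm_eq_abs, abs_mul]
        exact mul_le_of_le_one_left (abs_nonneg _) (hbbd ω))
  have hBZi := hmul B Z hBm hBbd hZm hgi
  have hB2Zi := hmul B2 Z hB2m hB2bd hZm hgi
  have hBZni : ∀ n, Integrable (fun ω => B ω * Zn n ω) P :=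
    fun n => hmul B (Zn n) hBm hBbd (hZnm n) (hZni n)
  have hB2Zni : ∀ n, Integrable (fun ω => B2 ω * Zn n ω) P :=
    fun n => hmul B2 (Zn n) hB2m hB2bd (hZnm n) (hZni n)
  set D : Ω → ℝ := fun ω =>
    (P[fun ω => B ω * Z ω | m]) ω - ρ ω * (P[fun ω => B2 ω * Z ω | m]) ω with hD
  have hDm : Measurable[inst] D := by
    exact ((stronglyMeasurable_condExp.mono hm).measurable).sub
      (hρm.mul (stronglyMeasurable_condExp.mono hm).measurable)
  have key : ∀ n, eLpNorm D 1 P ≤ 2 * eLpNorm (fun ω => Z ω - Zn n ω) 1 P := by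
    intro n
    have hEn := h (F n) (hFm n) (hFbd n)
    have hDeq : D =ᵐ[P] fun ω =>
        ((P[fun ω => B ω * Z ω | m]) ω - (P[fun ω => B ω * Zn n ω | m]) ω)
        + ρ ω * ((P[fun ω => B2 ω * Zn n ω | m]) ω - (P[fun ω => B2 ω * Z ω | m]) ω) := by
      filter_upwards [hEn] with ω hω
      beta_reduce at hω
      simp only [hD, hZn]
      linear_combination hω
    calc eLpNorm D 1 P
        = eLpNorm (fun ω =>
            ((P[fun ω => B ω * Z ω | m]) ω - (P[fun ω => B ω * Zn n ω | m]) ω)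
            + ρ ω * ((P[fun ω => B2 ω * Zn n ω | m]) ω - (P[fun ω => B2 ω * Z ω | m]) ω)) 1 P :=
          eLpNorm_congr_ae hDeq
      _ ≤ eLpNorm (fun ω =>
            (P[fun ω => B ω * Z ω | m]) ω - (P[fun ω => B ω * Zn n ω | m]) ω) 1 P
          + eLpNorm (fun ω =>
            ρ ω * ((P[fun ω => B2 ω * Zn n ω | m]) ω - (P[fun ω => B2 ω * Z ω | m]) ω)) 1 P := by
          refine eLpNorm_add_le ?_ ?_ le_rfl
          · exact (((stronglyMeasurable_condExp.mono hm).measurable).sub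
              ((stronglyMeasurable_condExp.mono hm).measurable)).aestronglyMeasurable
          · exact (hρm.mul (((stronglyMeasurable_condExp.mono hm).measurable).sub
              ((stronglyMeasurable_condExp.mono hm).measurable))).aestronglyMeasurable
      _ ≤ eLpNorm (fun ω => Z ω - Zn n ω) 1 P + eLpNorm (fun ω => Z ω - Zn n ω) 1 P := by
          gcongr ?_ + ?_
          · have h1 : (fun ω =>
                (P[fun ω => B ω * Z ω | m]) ω - (P[fun ω => B ω * Zn n ω | m]) ω)
                =ᵐ[P] P[(fun ω => B ω * Z ω) - fun ω => B ω * Zn n ω | m] :=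
              (condExp_sub hBZi (hBZni n) m).symm
            rw [eLpNorm_congr_ae h1]
            refine (eLpNorm_one_condExp_le_eLpNorm _).trans ?_
            refine eLpNorm_mono_ae (Filter.Eventually.of_forall fun ω => ?_)
            have he : ((fun ω => B ω * Z ω) - fun ω => B ω * Zn n ω) ω
                = B ω * (Z ω - Zn n ω) := by
              simp only [Pi.sub_apply]; ring
            rw [he]
            simp only [Real.norm_eq_abs, abs_mul]
            exact mul_le_of_le_one_left (abs_nonneg _) (hBbd ω)
          · have hle : (∀ᵐ ω ∂P, ‖ρ ω * ((P[fun ω => B2 ω * Zn n ω | m]) ω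
                - (P[fun ω => B2 ω * Z ω | m]) ω)‖
                ≤ ‖(P[fun ω => B2 ω * Zn n ω | m]) ω - (P[fun ω => B2 ω * Z ω | m]) ω‖) := by
              filter_upwards [hρbd] with ω hω
              simp only [Real.norm_eq_abs, abs_mul]
              exact mul_le_of_le_one_left (abs_nonneg _) hω
            refine (eLpNorm_mono_ae hle).trans ?_
            have h1 : (fun ω =>
                (P[fun ω => B2 ω * Zn n ω | m]) ω - (P[fun ω => B2 ω * Z ω | m]) ω)
                =ᵐ[P] P[(fun ω => B2 ω * Zn n ω) - fun ω => B2 ω * Z ω | m] :=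
              (condExp_sub (hB2Zni n) hB2Zi m).symm
            rw [eLpNorm_congr_ae h1]
            refine (eLpNorm_one_condExp_le_eLpNorm _).trans ?_
            refine eLpNorm_mono_ae (Filter.Eventually.of_forall fun ω => ?_)
            have he : ((fun ω => B2 ω * Zn n ω) - fun ω => B2 ω * Z ω) ω
                = -(B2 ω * (Z ω - Zn n ω)) := by
              simp only [Pi.sub_apply]; ring
            rw [he]
            simp only [Real.norm_eq_abs, abs_neg, abs_mul]
            exact mul_le_of_le_one_left (abs_nonneg _) (hB2bd ω)
      _ = 2 * eLpNorm (fun ω => Z ω - Zn n ω) 1 P := by ring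
  have htend : Tendsto (fun n => eLpNorm (fun ω => Z ω - Zn n ω) 1 P) atTop (nhds 0) := by
    simp only [eLpNorm_one_eq_lintegral_enorm]
    have h0 : (0 : ℝ≥0∞) = ∫⁻ ω, 0 ∂P := by simp
    rw [h0]
    refine @tendsto_lintegral_of_dominated_convergence Ω inst P _ _ (fun ω => 2 * (‖Z ω‖₊ : ℝ≥0∞)) ?_ ?_ ?_ ?_
    · intro n
      have h1 : Measurable[inst] fun ω => Z ω - Zn n ω := hZm.sub (hZnm n)
      have h2 : Measurable[inst] fun ω => ((‖Z ω - Zn n ω‖₊ : ℝ≥0∞)) := by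
        exact measurable_coe_nnreal_ennreal.comp (measurable_nnnorm.comp h1)
      exact h2
    · intro n
      refine Filter.Eventually.of_forall fun ω => ?_
      have h1 : ‖Z ω - Zn n ω‖₊ ≤ ‖Z ω‖₊ + ‖Zn n ω‖₊ := nnnorm_sub_le _ _
      have h2 : ‖Zn n ω‖₊ ≤ ‖Z ω‖₊ := by
        rw [← NNReal.coe_le_coe]
        simpa [hZn, hZ, Real.norm_eq_abs, coe_nnnorm] using hFabs n (Y0 ω, Y1 ω)
      calc (‖Z ω - Zn n ω‖₊ : ℝ≥0∞) ≤ (‖Z ω‖₊ : ℝ≥0∞) + ‖Zn n ω‖₊ := by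
            exact_mod_cast h1
        _ ≤ (‖Z ω‖₊ : ℝ≥0∞) + ‖Z ω‖₊ := add_le_add le_rfl (by exact_mod_cast h2)
        _ = 2 * ‖Z ω‖₊ := by ring
    · have hfin : (∫⁻ ω, (‖Z ω‖₊ : ℝ≥0∞) ∂P) < ⊤ := hgi.2
      have hmz : Measurable[inst] fun ω => ((‖Z ω‖₊ : ℝ≥0∞)) := by
        exact measurable_coe_nnreal_ennreal.comp (measurable_nnnorm.comp hZm)
      have : (∫⁻ ω, 2 * (‖Z ω‖₊ : ℝ≥0∞) ∂P) < ⊤ := by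
        rw [lintegral_const_mul 2 hmz]
        exact ENNReal.mul_lt_top (by norm_num) hfin
      exact this.ne
    · refine Filter.Eventually.of_forall fun ω => ?_
      have hev : (fun n => ((‖Z ω - Zn n ω‖₊ : ℝ≥0∞))) =ᶠ[atTop] (fun _ => 0) := by
        obtain ⟨N, hN⟩ := exists_nat_ge (|g (Y0 ω, Y1 ω)|)
        filter_upwards [eventually_ge_atTop N] with n hn
        have hle : |g (Y0 ω, Y1 ω)| ≤ (n : ℝ) := hN.trans (by exact_mod_cast hn)
        simp [hZn, hF, hZ, hle]
      exact Tendsto.congr' hev.symm tendsto_const_nhds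
  have hD0 : eLpNorm D 1 P = 0 := by
    have hle : eLpNorm D 1 P ≤ 0 := by
      have h2 : Tendsto (fun n => 2 * eLpNorm (fun ω => Z ω - Zn n ω) 1 P) atTop
          (nhds (2 * 0)) := ENNReal.Tendsto.const_mul htend (Or.inr (by norm_num))
      have h2' : Tendsto (fun n => 2 * eLpNorm (fun ω => Z ω - Zn n ω) 1 P) atTop
          (nhds 0) := by simpa using h2
      exact ge_of_tendsto h2' (Filter.Eventually.of_forall key)
    exact le_antisymm hle zero_le'
  have hae := (eLpNorm_eq_zero_iff hDm.aestronglyMeasurable one_ne_zero).mp hD0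
  filter_upwards [hae] with ω hω
  have hω' : D ω = 0 := hω
  simp only [hD] at hω'
  linarith [hω']


theorem eif_setting_I_mean_zero
    {Ω : Type*} [MeasurableSpace Ω] (P : Measure Ω) [IsProbabilityMeasure P]
    (X A G Y0 Y1 Y : Ω → ℝ)
    (hX : Measurable X) (hA : Measurable A) (hG : Measurable G)
    (hY0m : Measurable Y0) (hY1m : Measurable Y1)
    (hY0 : Integrable Y0 P) (hY1 : Integrable Y1 P)
    (hAbin : ∀ ω, A ω = 0 ∨ A ω = 1) (hGbin : ∀ ω, G ω = 0 ∨ G ω = 1)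
    (hcons : ∀ ω, Y ω = A ω * Y1 ω + (1 - A ω) * Y0 ω)
    (e1 π μ0 μ1 : ℝ → ℝ)
    (he1m : Measurable e1) (hπm : Measurable π)
    (hμ0m : Measurable μ0) (hμ1m : Measurable μ1)
    (hπ : (fun ω => π (X ω)) =ᵐ[P] P[G | mX X])
    (he1 : (fun ω => e1 (X ω) * π (X ω)) =ᵐ[P] P[fun ω => A ω * G ω | mX X])
    (hpose : ∀ᵐ ω ∂P, 0 < e1 (X ω) ∧ e1 (X ω) < 1)
    (hposπ : ∀ᵐ ω ∂P, 0 < π (X ω) ∧ π (X ω) < 1)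
    (hunconf : ∀ f : ℝ × ℝ → ℝ, Measurable f → (∃ C, ∀ p, |f p| ≤ C) →
      P[fun ω => G ω * A ω * f (Y0 ω, Y1 ω) | mX X]
        =ᵐ[P] fun ω => e1 (X ω) * (P[fun ω => G ω * f (Y0 ω, Y1 ω) | mX X]) ω)
    (htrans : ∀ f : ℝ × ℝ → ℝ, Measurable f → (∃ C, ∀ p, |f p| ≤ C) →
      P[fun ω => G ω * f (Y0 ω, Y1 ω) | mX X]
        =ᵐ[P] fun ω => π (X ω) * (P[fun ω => f (Y0 ω, Y1 ω) | mX X]) ω)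
    (hμ1 : (fun ω => μ1 (X ω) * e1 (X ω) * π (X ω)) =ᵐ[P]
      P[fun ω => A ω * G ω * Y ω | mX X])
    (hμ0 : (fun ω => μ0 (X ω) * (1 - e1 (X ω)) * π (X ω)) =ᵐ[P]
      P[fun ω => (1 - A ω) * G ω * Y ω | mX X])
    (q τ : ℝ)
    (hq : q = (P {ω | G ω = 1}).toReal) (hq0 : 0 < q) (hq1 : q < 1)
    (hτ : τ = (∫ ω, (1 - G ω) * (Y1 ω - Y0 ω) ∂P) / (1 - q))
    (φI : Ω → ℝ)
    (hφI : ∀ ω, φI ω =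
      G ω / (1 - q) * ((1 - π (X ω)) / π (X ω)) *
        (A ω * (Y ω - μ1 (X ω)) / e1 (X ω)
          - (1 - A ω) * (Y ω - μ0 (X ω)) / (1 - e1 (X ω)))
      + (1 - G ω) / (1 - q) * (μ1 (X ω) - μ0 (X ω) - τ))
    (hφIint : Integrable φI P) :
    ∫ ω, φI ω ∂P = 0 := by
  classical
  have hm : mX X ≤ ‹MeasurableSpace Ω› := hX.comap_le
  -- basic bounds
  have hAbd : ∀ ω, |A ω| ≤ 1 := fun ω => by rcases hAbin ω with h | h <;> simp [h]
  have hGbd : ∀ ω, |G ω| ≤ 1 := fun ω => by rcases hGbin ω with h | h <;> simp [h]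
  have hGAbd : ∀ ω, |G ω * A ω| ≤ 1 := fun ω => by
    rcases hGbin ω with h | h <;> rcases hAbin ω with h' | h' <;> simp [h, h']
  have hAGbd : ∀ ω, |A ω * G ω| ≤ 1 := fun ω => by
    rcases hGbin ω with h | h <;> rcases hAbin ω with h' | h' <;> simp [h, h']
  have h1Gbd : ∀ ω, |1 - G ω| ≤ 1 := fun ω => by rcases hGbin ω with h | h <;> simp [h]
  have hπbd : ∀ᵐ ω ∂P, |π (X ω)| ≤ 1 := by
    filter_upwards [hposπ] with ω h; rw [abs_le]; constructor <;> linarith [h.1, h.2]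
  have he1bd : ∀ᵐ ω ∂P, |e1 (X ω)| ≤ 1 := by
    filter_upwards [hpose] with ω h; rw [abs_le]; constructor <;> linarith [h.1, h.2]
  -- Y is measurable and integrable
  have hYmeq : Y = fun ω => A ω * Y1 ω + (1 - A ω) * Y0 ω := funext hcons
  have hYm : Measurable Y := by
    rw [hYmeq]; exact (hA.mul hY1m).add ((measurable_const.sub hA).mul hY0m)
  have hYint : Integrable Y P := by
    refine (hY1.abs.add hY0.abs).mono hYm.aestronglyMeasurable
      (Eventually.of_forall fun ω => ?_)
    simp only [Pi.add_apply, Real.norm_eq_abs]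
    rw [abs_of_nonneg (by positivity : (0:ℝ) ≤ |Y1 ω| + |Y0 ω|)]
    rcases hAbin ω with h | h <;> rw [hcons ω, h] <;>
      simp [abs_nonneg, le_add_of_nonneg_left, le_add_of_nonneg_right]
  -- product integrability helper
  have hmulint : ∀ (b f : Ω → ℝ), Measurable b → (∀ ω, |b ω| ≤ 1) →
      AEStronglyMeasurable f P → Integrable f P → Integrable (fun ω => b ω * f ω) P := by
    intro b f hb hbbd hfm hf
    refine hf.mono (hb.aemeasurable.aestronglyMeasurable.mul hfm)
      (Eventually.of_forall fun ω => ?_)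
    simp only [Real.norm_eq_abs, abs_mul]
    exact mul_le_of_le_one_left (abs_nonneg _) (hbbd ω)
  -- K lemmas
  have hKtrans : ∀ (g : ℝ × ℝ → ℝ), Measurable g →
      Integrable (fun ω => g (Y0 ω, Y1 ω)) P →
      P[fun ω => G ω * g (Y0 ω, Y1 ω) | mX X]
        =ᵐ[P] fun ω => π (X ω) * (P[fun ω => g (Y0 ω, Y1 ω) | mX X]) ω := by
    intro g hg hgi
    have h := key_ext P Y0 Y1 hY0m hY1m G (fun _ => (1:ℝ)) (fun ω => π (X ω)) hG
      measurable_const (hπm.comp hX) hGbd (fun ω => by norm_num) hπbd hm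
      (fun f hf hbd => by simpa using htrans f hf hbd) g hg hgi
    simpa using h
  have hKunconf : ∀ (g : ℝ × ℝ → ℝ), Measurable g →
      Integrable (fun ω => g (Y0 ω, Y1 ω)) P →
      P[fun ω => G ω * A ω * g (Y0 ω, Y1 ω) | mX X]
        =ᵐ[P] fun ω => e1 (X ω) * (P[fun ω => G ω * g (Y0 ω, Y1 ω) | mX X]) ω := by
    intro g hg hgi
    exact key_ext P Y0 Y1 hY0m hY1m (fun ω => G ω * A ω) G (fun ω => e1 (X ω))
      (hG.mul hA) hG (he1m.comp hX) hGAbd hGbd he1bd hm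
      (fun f hf hbd => hunconf f hf hbd) g hg hgi
  -- instances of K lemmas
  have hT1 : P[fun ω => G ω * Y1 ω | mX X]
      =ᵐ[P] fun ω => π (X ω) * (P[Y1 | mX X]) ω :=
    hKtrans (fun p => p.2) measurable_snd hY1
  have hT0 : P[fun ω => G ω * Y0 ω | mX X]
      =ᵐ[P] fun ω => π (X ω) * (P[Y0 | mX X]) ω :=
    hKtrans (fun p => p.1) measurable_fst hY0
  have hU1 : P[fun ω => G ω * A ω * Y1 ω | mX X]
      =ᵐ[P] fun ω => e1 (X ω) * (P[fun ω => G ω * Y1 ω | mX X]) ω :=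
    hKunconf (fun p => p.2) measurable_snd hY1
  have hU0 : P[fun ω => G ω * A ω * Y0 ω | mX X]
      =ᵐ[P] fun ω => e1 (X ω) * (P[fun ω => G ω * Y0 ω | mX X]) ω :=
    hKunconf (fun p => p.1) measurable_fst hY0
  -- identify μ1 with M1 := P[Y1|mX X]
  have hμ1M : (fun ω => μ1 (X ω)) =ᵐ[P] P[Y1 | mX X] := by
    have h1 : (fun ω => A ω * G ω * Y ω) = fun ω => G ω * A ω * Y1 ω := by
      funext ω; rcases hAbin ω with h | h <;> rw [hcons ω, h] <;> ring
    have h2 := hμ1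
    rw [h1] at h2
    have h3 : (fun ω => μ1 (X ω) * e1 (X ω) * π (X ω))
        =ᵐ[P] fun ω => e1 (X ω) * (π (X ω) * (P[Y1 | mX X]) ω) := by
      refine h2.trans (hU1.trans ?_)
      filter_upwards [hT1] with ω hω
      rw [hω]
    filter_upwards [h3, hpose, hposπ] with ω heq he hp
    have hne : e1 (X ω) * π (X ω) ≠ 0 := ne_of_gt (mul_pos he.1 hp.1)
    apply mul_right_cancel₀ hne
    linear_combination heq
  -- identify μ0 with M0 := P[Y0|mX X]
  have hGY0int : Integrable (fun ω => G ω * Y0 ω) P :=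
    hmulint G Y0 hG hGbd hY0m.aestronglyMeasurable hY0
  have hGAY0int : Integrable (fun ω => G ω * A ω * Y0 ω) P :=
    hmulint (fun ω => G ω * A ω) Y0 (hG.mul hA) hGAbd hY0m.aestronglyMeasurable hY0
  have hGY1int : Integrable (fun ω => G ω * Y1 ω) P :=
    hmulint G Y1 hG hGbd hY1m.aestronglyMeasurable hY1
  have hGAY1int : Integrable (fun ω => G ω * A ω * Y1 ω) P :=
    hmulint (fun ω => G ω * A ω) Y1 (hG.mul hA) hGAbd hY1m.aestronglyMeasurable hY1
  have hμ0M : (fun ω => μ0 (X ω)) =ᵐ[P] P[Y0 | mX X] := by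
    have h1 : (fun ω => (1 - A ω) * G ω * Y ω)
        = fun ω => G ω * Y0 ω - G ω * A ω * Y0 ω := by
      funext ω; rcases hAbin ω with h | h <;> rw [hcons ω, h] <;> ring
    have h2 := hμ0
    rw [h1] at h2
    have hsub : P[fun ω => G ω * Y0 ω - G ω * A ω * Y0 ω | mX X]
        =ᵐ[P] fun ω => (P[fun ω => G ω * Y0 ω | mX X]) ω
          - (P[fun ω => G ω * A ω * Y0 ω | mX X]) ω :=
      condExp_sub hGY0int hGAY0int (mX X)
    have h3 : (fun ω => μ0 (X ω) * (1 - e1 (X ω)) * π (X ω))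
        =ᵐ[P] fun ω => π (X ω) * (P[Y0 | mX X]) ω
          - e1 (X ω) * (π (X ω) * (P[Y0 | mX X]) ω) := by
      refine (h2.trans hsub).trans ?_
      filter_upwards [hT0, hU0] with ω hω hω'
      rw [hω', hω]
    filter_upwards [h3, hpose, hposπ] with ω heq he hp
    have hne : (1 - e1 (X ω)) * π (X ω) ≠ 0 :=
      ne_of_gt (mul_pos (by linarith [he.2]) hp.1)
    apply mul_right_cancel₀ hne
    linear_combination heq
  -- conditional expectations of G and A*G
  have hEG : P[G | mX X] =ᵐ[P] fun ω => π (X ω) := hπ.symm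
  have hEAG : P[fun ω => A ω * G ω | mX X] =ᵐ[P] fun ω => e1 (X ω) * π (X ω) := he1.symm
  have hGint : Integrable G P := by
    have := hmulint G (fun _ => (1:ℝ)) hG hGbd aestronglyMeasurable_const (integrable_const 1)
    exact this.congr (Eventually.of_forall fun ω => by simp)
  have hAGint : Integrable (fun ω => A ω * G ω) P :=
    hmulint A G hA hAbd hG.aestronglyMeasurable hGint
  have hM1m : AEStronglyMeasurable (P[Y1 | mX X]) P :=
    (stronglyMeasurable_condExp.mono hm).aestronglyMeasurable
  have hM0m : AEStronglyMeasurable (P[Y0 | mX X]) P :=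
    (stronglyMeasurable_condExp.mono hm).aestronglyMeasurable
  have hM1meas : Measurable (P[Y1 | mX X]) := (stronglyMeasurable_condExp.mono hm).measurable
  have hM0meas : Measurable (P[Y0 | mX X]) := (stronglyMeasurable_condExp.mono hm).measurable
  set M1 : Ω → ℝ := P[Y1 | mX X] with hM1def
  set M0 : Ω → ℝ := P[Y0 | mX X] with hM0def
  set B1 : Ω → ℝ := fun ω => (1 - π (X ω)) / π (X ω) * (e1 (X ω))⁻¹ with hB1def
  set B2 : Ω → ℝ := fun ω => (1 - π (X ω)) / π (X ω) * (1 - e1 (X ω))⁻¹ with hB2def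
  set H1 : Ω → ℝ := fun ω => A ω * G ω * (Y ω - M1 ω) with hH1def
  set H2 : Ω → ℝ := fun ω => (1 - A ω) * G ω * (Y ω - M0 ω) with hH2def
  set S3 : Ω → ℝ := fun ω => (1 - G ω) * (M1 ω - M0 ω - τ) with hS3def
  have hq1' : (1:ℝ) - q ≠ 0 := by linarith
  -- zero-integral helper
  have hint0 : ∀ (b h : Ω → ℝ), StronglyMeasurable[mX X] b → Integrable h P →
      Integrable (fun ω => b ω * h ω) P → (P[h | mX X] =ᵐ[P] fun _ => (0:ℝ)) →
      ∫ ω, b ω * h ω ∂P = 0 := by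
    intro b h hb hh hbh h0
    have hp2 : P[fun ω => b ω * h ω | mX X] =ᵐ[P] fun _ => (0:ℝ) := by
      refine (condExp_mul_of_stronglyMeasurable_left hb hbh hh).trans ?_
      filter_upwards [h0] with ω hω
      beta_reduce at hω
      simp only [Pi.mul_apply]
      simp [hω]
    rw [← integral_condExp hm (f := fun ω => b ω * h ω), integral_congr_ae hp2]
    simp
  -- conditional expectation of H1 is zero
  have hM1AGint : Integrable (fun ω => M1 ω * (A ω * G ω)) P :=
    (hmulint (fun ω => A ω * G ω) M1 (hA.mul hG) hAGbd hM1m integrable_condExp).congr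
      (Eventually.of_forall fun ω => mul_comm _ _)
  have hpull1 : P[fun ω => M1 ω * (A ω * G ω) | mX X]
      =ᵐ[P] fun ω => M1 ω * (P[fun ω => A ω * G ω | mX X]) ω :=
    condExp_mul_of_stronglyMeasurable_left stronglyMeasurable_condExp hM1AGint hAGint
  have hcond1 : P[H1 | mX X] =ᵐ[P] fun _ => (0:ℝ) := by
    have hh1eq : H1 = fun ω => G ω * A ω * Y1 ω - M1 ω * (A ω * G ω) := by
      rw [hH1def]
      funext ω; rcases hAbin ω with h | h <;> rw [hcons ω, h] <;> ring
    rw [hh1eq]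
    refine (condExp_sub hGAY1int hM1AGint (mX X)).trans ?_
    filter_upwards [hU1, hT1, hpull1, hEAG] with ω h1 h2 h3 h4
    beta_reduce at h1 h2 h3 h4
    simp only [Pi.sub_apply]
    rw [h1, h2, h3, h4]
    ring
  -- conditional expectation of H2 is zero
  have hG1Abd : ∀ ω, |G ω - A ω * G ω| ≤ 1 := fun ω => by
    rcases hGbin ω with h | h <;> rcases hAbin ω with h' | h' <;> simp [h, h']
  have hM0Gint : Integrable (fun ω => M0 ω * (G ω - A ω * G ω)) P :=
    (hmulint (fun ω => G ω - A ω * G ω) M0 (hG.sub (hA.mul hG)) hG1Abd hM0m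
      integrable_condExp).congr (Eventually.of_forall fun ω => mul_comm _ _)
  have hpull0 : P[fun ω => M0 ω * (G ω - A ω * G ω) | mX X]
      =ᵐ[P] fun ω => M0 ω * (P[fun ω => G ω - A ω * G ω | mX X]) ω :=
    condExp_mul_of_stronglyMeasurable_left stronglyMeasurable_condExp hM0Gint (hGint.sub hAGint)
  have hEGsub : P[fun ω => G ω - A ω * G ω | mX X]
      =ᵐ[P] fun ω => π (X ω) - e1 (X ω) * π (X ω) := by
    refine (condExp_sub hGint hAGint (mX X)).trans ?_
    filter_upwards [hEG, hEAG] with ω h1 h2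
    beta_reduce at h1 h2
    simp only [Pi.sub_apply]
    rw [h1, h2]
  have hcond2 : P[H2 | mX X] =ᵐ[P] fun _ => (0:ℝ) := by
    have hh2eq : H2 = fun ω =>
        (G ω * Y0 ω - G ω * A ω * Y0 ω) - M0 ω * (G ω - A ω * G ω) := by
      rw [hH2def]
      funext ω; rcases hAbin ω with h | h <;> rw [hcons ω, h] <;> ring
    rw [hh2eq]
    refine (condExp_sub (hGY0int.sub hGAY0int) hM0Gint (mX X)).trans ?_
    have hsub2 : P[(fun ω => G ω * Y0 ω) - fun ω => G ω * A ω * Y0 ω | mX X]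
        =ᵐ[P] fun ω => (P[fun ω => G ω * Y0 ω | mX X]) ω
          - (P[fun ω => G ω * A ω * Y0 ω | mX X]) ω := condExp_sub hGY0int hGAY0int (mX X)
    filter_upwards [hsub2, hT0, hU0, hpull0, hEGsub] with ω h0 h1 h2 h3 h4
    beta_reduce at h0 h1 h2 h3 h4
    simp only [Pi.sub_apply]
    rw [h0, h3, h4, h2, h1]
    ring
  -- decomposition of φI
  have hdecomp : φI =ᵐ[P] fun ω => (1 - q)⁻¹ * (B1 ω * H1 ω - B2 ω * H2 ω + S3 ω) := by
    filter_upwards [hμ1M, hμ0M] with ω h1 h0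
    beta_reduce at h1 h0
    rw [hφI ω]
    simp only [hB1def, hB2def, hH1def, hH2def, hS3def]
    rw [h1, h0]
    ring
  -- integrability of the pieces
  have hB1meas : Measurable B1 := by
    rw [hB1def]
    exact ((measurable_const.sub (hπm.comp hX)).div (hπm.comp hX)).mul ((he1m.comp hX).inv)
  have hB2meas : Measurable B2 := by
    rw [hB2def]
    exact ((measurable_const.sub (hπm.comp hX)).div (hπm.comp hX)).mul
      ((measurable_const.sub (he1m.comp hX)).inv)
  have hH1meas : Measurable H1 := by
    rw [hH1def]; exact (hA.mul hG).mul (hYm.sub hM1meas)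
  have hH2meas : Measurable H2 := by
    rw [hH2def]; exact ((measurable_const.sub hA).mul hG).mul (hYm.sub hM0meas)
  have hH1int : Integrable H1 P :=
    hmulint (fun ω => A ω * G ω) (fun ω => Y ω - M1 ω) (hA.mul hG) hAGbd
      (hYm.aestronglyMeasurable.sub hM1m) (hYint.sub integrable_condExp)
  have hH2int : Integrable H2 P :=
    hmulint (fun ω => (1 - A ω) * G ω) (fun ω => Y ω - M0 ω)
      ((measurable_const.sub hA).mul hG)
      (fun ω => by rcases hGbin ω with h | h <;> rcases hAbin ω with h' | h' <;> simp [h, h'])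
      (hYm.aestronglyMeasurable.sub hM0m) (hYint.sub integrable_condExp)
  have hS3int : Integrable S3 P :=
    hmulint (fun ω => 1 - G ω) (fun ω => M1 ω - M0 ω - τ) (measurable_const.sub hG) h1Gbd
      ((hM1m.sub hM0m).sub aestronglyMeasurable_const)
      ((integrable_condExp.sub integrable_condExp).sub (integrable_const τ))
  have hsumint : Integrable (fun ω => B1 ω * H1 ω - B2 ω * H2 ω) P := by
    have h1 : (fun ω => B1 ω * H1 ω - B2 ω * H2 ω)
        =ᵐ[P] fun ω => (1 - q) * φI ω - S3 ω := by
      filter_upwards [hdecomp] with ω h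
      beta_reduce at h
      rw [h]
      field_simp
      ring
    exact ((hφIint.const_mul (1 - q)).sub hS3int).congr h1.symm
  have hB1H1int : Integrable (fun ω => B1 ω * H1 ω) P := by
    refine hsumint.mono (hB1meas.mul hH1meas).aestronglyMeasurable
      (Eventually.of_forall fun ω => ?_)
    simp only [Real.norm_eq_abs, hH1def, hH2def]
    rcases hAbin ω with h | h <;> simp [h, abs_nonneg] <;> positivity
  have hB2H2int : Integrable (fun ω => B2 ω * H2 ω) P := by
    refine hsumint.mono (hB2meas.mul hH2meas).aestronglyMeasurable
      (Eventually.of_forall fun ω => ?_)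
    simp only [Real.norm_eq_abs, hH1def, hH2def]
    rcases hAbin ω with h | h <;> simp [h, abs_nonneg, zero_sub, abs_neg] <;> positivity
  -- the two martingale terms integrate to zero
  have hB1sm : StronglyMeasurable[mX X] B1 := by
    rw [hB1def]
    exact Measurable.stronglyMeasurable
      (((measurable_const.sub (hπm.comp (comap_measurable X))).div
        (hπm.comp (comap_measurable X))).mul ((he1m.comp (comap_measurable X)).inv))
  have hB2sm : StronglyMeasurable[mX X] B2 := by
    rw [hB2def]
    exact Measurable.stronglyMeasurable
      (((measurable_const.sub (hπm.comp (comap_measurable X))).div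
        (hπm.comp (comap_measurable X))).mul
        ((measurable_const.sub (he1m.comp (comap_measurable X))).inv))
  have hI1 : ∫ ω, B1 ω * H1 ω ∂P = 0 := hint0 B1 H1 hB1sm hH1int hB1H1int hcond1
  have hI2 : ∫ ω, B2 ω * H2 ω ∂P = 0 := hint0 B2 H2 hB2sm hH2int hB2H2int hcond2
  -- ∫ G = q and ∫ (1-G) = 1 - q
  have hGq : ∫ ω, G ω ∂P = q := by
    have hset : MeasurableSet {ω | G ω = 1} := hG (measurableSet_singleton 1)
    have hGind : G = Set.indicator {ω | G ω = 1} (fun _ => (1:ℝ)) := by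
      funext ω; rcases hGbin ω with h | h
      · rw [h]; symm; apply Set.indicator_of_notMem; simp [h]
      · rw [h]; symm; exact Set.indicator_of_mem (by simp [h]) _
    rw [hGind, hq]
    exact integral_indicator_one hset
  have h1Gq : ∫ ω, (1 - G ω) ∂P = 1 - q := by
    rw [integral_sub (integrable_const 1) hGint, hGq]
    simp
  -- conditional expectation of 1 - G
  have hE1G : P[fun ω => 1 - G ω | mX X] =ᵐ[P] fun ω => 1 - π (X ω) := by
    refine (condExp_sub (integrable_const 1) hGint (mX X)).trans ?_
    have hc : P[fun _ => (1:ℝ) | mX X] = fun _ => (1:ℝ) := condExp_const hm 1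
    filter_upwards [hEG] with ω hω
    beta_reduce at hω
    simp only [Pi.sub_apply]
    rw [hc, hω]
  -- tower identity for ∫ (1-G)(Y1-Y0)
  have hTd : P[fun ω => G ω * (Y1 ω - Y0 ω) | mX X]
      =ᵐ[P] fun ω => π (X ω) * (P[fun ω => Y1 ω - Y0 ω | mX X]) ω :=
    hKtrans (fun p => p.2 - p.1) (measurable_snd.sub measurable_fst) (hY1.sub hY0)
  have hGdiffint : Integrable (fun ω => G ω * (Y1 ω - Y0 ω)) P :=
    hmulint G (fun ω => Y1 ω - Y0 ω) hG hGbd (hY1m.sub hY0m).aestronglyMeasurable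
      (hY1.sub hY0)
  have htow : ∫ ω, (1 - G ω) * (Y1 ω - Y0 ω) ∂P
      = ∫ ω, (1 - π (X ω)) * (M1 ω - M0 ω) ∂P := by
    have hfun : (fun ω => (1 - G ω) * (Y1 ω - Y0 ω))
        = fun ω => (Y1 ω - Y0 ω) - G ω * (Y1 ω - Y0 ω) := funext fun ω => by ring
    rw [hfun, ← integral_condExp hm (f := fun ω => (Y1 ω - Y0 ω) - G ω * (Y1 ω - Y0 ω))]
    have hcd : P[fun ω => (Y1 ω - Y0 ω) - G ω * (Y1 ω - Y0 ω) | mX X]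
        =ᵐ[P] fun ω => (1 - π (X ω)) * (M1 ω - M0 ω) := by
      refine (condExp_sub (hY1.sub hY0) hGdiffint (mX X)).trans ?_
      have hd : P[Y1 - Y0 | mX X] =ᵐ[P] fun ω => M1 ω - M0 ω :=
        condExp_sub hY1 hY0 (mX X)
      have hd2 : P[fun ω => Y1 ω - Y0 ω | mX X] =ᵐ[P] fun ω => M1 ω - M0 ω :=
        condExp_sub hY1 hY0 (mX X)
      filter_upwards [hd, hd2, hTd] with ω h1 h1' h2
      beta_reduce at h1 h1' h2
      simp only [Pi.sub_apply]
      rw [h2, h1', h1]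
      ring
    exact integral_congr_ae hcd
  -- tower identity for ∫ (1-G)(M1-M0)
  have hMdiffG : Integrable (fun ω => (M1 ω - M0 ω) * (1 - G ω)) P :=
    (hmulint (fun ω => 1 - G ω) (fun ω => M1 ω - M0 ω) (measurable_const.sub hG) h1Gbd
      (hM1m.sub hM0m) (integrable_condExp.sub integrable_condExp)).congr
      (Eventually.of_forall fun ω => mul_comm _ _)
  have htow2 : ∫ ω, (1 - G ω) * (M1 ω - M0 ω) ∂P
      = ∫ ω, (1 - π (X ω)) * (M1 ω - M0 ω) ∂P := by
    have hfun : (fun ω => (1 - G ω) * (M1 ω - M0 ω))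
        = fun ω => (M1 ω - M0 ω) * (1 - G ω) := funext fun ω => by ring
    rw [hfun, ← integral_condExp hm (f := fun ω => (M1 ω - M0 ω) * (1 - G ω))]
    have hpull : P[fun ω => (M1 ω - M0 ω) * (1 - G ω) | mX X]
        =ᵐ[P] fun ω => (1 - π (X ω)) * (M1 ω - M0 ω) := by
      refine (condExp_mul_of_stronglyMeasurable_left
        (stronglyMeasurable_condExp.sub stronglyMeasurable_condExp) hMdiffG
        ((integrable_const 1).sub hGint)).trans ?_
      filter_upwards [hE1G] with ω h1
      beta_reduce at h1
      simp only [Pi.mul_apply, Pi.sub_apply]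
      rw [h1]
      ring
    exact integral_congr_ae hpull
  -- ∫ S3 = 0
  have hτ' : ∫ ω, (1 - G ω) * (Y1 ω - Y0 ω) ∂P = τ * (1 - q) := by
    rw [hτ]; field_simp
  have hS3zero : ∫ ω, S3 ω ∂P = 0 := by
    have hfun : S3 = fun ω => (1 - G ω) * (M1 ω - M0 ω) - τ * (1 - G ω) := by
      rw [hS3def]; funext ω; ring
    have h1int : Integrable (fun ω => (1 - G ω) * (M1 ω - M0 ω)) P :=
      hMdiffG.congr (Eventually.of_forall fun ω => mul_comm _ _)
    have h2int : Integrable (fun ω => τ * (1 - G ω)) P :=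
      ((integrable_const 1).sub hGint).const_mul τ
    rw [hfun, integral_sub h1int h2int, htow2, ← htow, hτ', integral_const_mul, h1Gq]
    ring
  -- conclude
  have hfinal : ∫ ω, φI ω ∂P
      = ∫ ω, (1 - q)⁻¹ * (B1 ω * H1 ω - B2 ω * H2 ω + S3 ω) ∂P :=
    integral_congr_ae hdecomp
  rw [hfinal, integral_const_mul,
    integral_add hsumint hS3int, integral_sub hB1H1int hB2H2int, hI1, hI2, hS3zero]
  ring
end

section
/- Double robustness identity (outcome-model side): if m1, m0 are arbitrary bounded measurable functions of X, but the true e1(X) and π(X) are used, then E[ (G/(1−q))·((1−π(X))/π(X))·( A(Y−m1(X))/e1(X) − (1−A)(Y−m0(X))/(1−e1(X)) ) + ((1−G)/(1−q))·(m1(X) − m0(X)) ] = τ, under the identifying assumptions. -/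
open MeasureTheory ProbabilityTheory Filter
open scoped ENNReal NNReal

private lemma trunc_abs_le_s5 (n : ℕ) (z : ℝ) : |max (min z n) (-(n:ℝ))| ≤ |z| :=
  abs_le.2 ⟨le_trans (le_min (neg_abs_le z)
      (le_trans (neg_nonpos.2 (abs_nonneg z)) (Nat.cast_nonneg n))) (le_max_left _ _),
    max_le (le_trans (min_le_left _ _) (le_abs_self z))
      (le_trans (neg_nonpos.2 (Nat.cast_nonneg n)) (abs_nonneg z))⟩

private lemma trunc_eventually (z : ℝ) :
    ∀ᶠ n : ℕ in atTop, max (min z n) (-(n:ℝ)) = z := by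
  filter_upwards [eventually_ge_atTop ⌈|z|⌉₊] with n hn
  have h1 : |z| ≤ (n:ℝ) := le_trans (Nat.le_ceil _) (by exact_mod_cast hn)
  rw [min_eq_left (le_trans (le_abs_self z) h1),
    max_eq_left (le_trans (neg_le_neg h1) (neg_abs_le z))]

private lemma trunc_bdd (n : ℕ) (proj : ℝ × ℝ → ℝ) :
    ∃ C, ∀ p, |max (min (proj p) (n:ℝ)) (-(n:ℝ))| ≤ C :=
  ⟨n, fun _ => abs_le.2 ⟨le_max_right _ _,
    max_le (min_le_right _ _) (neg_le_self (Nat.cast_nonneg n))⟩⟩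

private lemma condexp_trunc_limit {Ω : Type*} [inst : MeasurableSpace Ω]
    (P : Measure Ω) [IsProbabilityMeasure P]
    (X : Ω → ℝ) (hX : Measurable X)
    (W W' c Z : Ω → ℝ)
    (hWm : Measurable W) (hW'm : Measurable W')
    (hWb : ∀ ω, |W ω| ≤ 1) (hW'b : ∀ ω, |W' ω| ≤ 1)
    (hcm : AEStronglyMeasurable c P) (hcb : ∀ᵐ ω ∂P, |c ω| ≤ 1)
    (hZm : Measurable Z) (hZ : Integrable Z P)
    (h : ∀ n : ℕ, P[fun ω => W ω * max (min (Z ω) n) (-(n:ℝ)) | mX X]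
        =ᵐ[P] fun ω => c ω * (P[fun ω => W' ω * max (min (Z ω) n) (-(n:ℝ)) | mX X]) ω) :
    P[fun ω => W ω * Z ω | mX X] =ᵐ[P] fun ω => c ω * (P[fun ω => W' ω * Z ω | mX X]) ω := by
  have hm : mX X ≤ inst := hX.comap_le
  haveI : IsFiniteMeasure (P.trim hm) := isFiniteMeasure_trim hm
  set Zn : ℕ → Ω → ℝ := fun n ω => max (min (Z ω) n) (-(n:ℝ)) with hZndef
  have hZnm : ∀ n, Measurable (Zn n) := fun n => (hZm.min measurable_const).max measurable_const
  have key : ∀ (V : Ω → ℝ), Measurable V → (∀ ω, |V ω| ≤ 1) → ∀ g : Ω → ℝ, Measurable g →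
      (∀ ω, |g ω| ≤ |Z ω|) → Integrable (fun ω => V ω * g ω) P := by
    intro V hV hVb g hg hgb
    refine hZ.abs.mono' (hV.mul hg).aestronglyMeasurable (Eventually.of_forall fun ω => ?_)
    rw [Real.norm_eq_abs, abs_mul]
    calc |V ω| * |g ω| ≤ 1 * |Z ω| :=
          mul_le_mul (hVb ω) (hgb ω) (abs_nonneg _) zero_le_one
      _ = |Z ω| := one_mul _
  have hWZ : Integrable (fun ω => W ω * Z ω) P := key W hWm hWb Z hZm fun ω => le_refl _
  have hW'Z : Integrable (fun ω => W' ω * Z ω) P := key W' hW'm hW'b Z hZm fun ω => le_refl _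
  have hWZn : ∀ n, Integrable (fun ω => W ω * Zn n ω) P :=
    fun n => key W hWm hWb (Zn n) (hZnm n) fun ω => trunc_abs_le_s5 n (Z ω)
  have hW'Zn : ∀ n, Integrable (fun ω => W' ω * Zn n ω) P :=
    fun n => key W' hW'm hW'b (Zn n) (hZnm n) fun ω => trunc_abs_le_s5 n (Z ω)
  set D : ℕ → ℝ≥0∞ := fun n => eLpNorm (fun ω => Z ω - Zn n ω) 1 P with hDdef
  have hDtend : Tendsto D atTop (nhds 0) := by
    have hrw : ∀ n, D n = ∫⁻ ω, (‖Z ω - Zn n ω‖₊ : ℝ≥0∞) ∂P := fun n =>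
      eLpNorm_one_eq_lintegral_enorm
    have h0 : (0 : ℝ≥0∞) = ∫⁻ _ω, (0:ℝ≥0∞) ∂P := by simp
    rw [funext hrw, h0]
    apply tendsto_lintegral_of_dominated_convergence (fun ω => 2 * (‖Z ω‖₊ : ℝ≥0∞))
    · exact fun n => (hZm.sub (hZnm n)).nnnorm.coe_nnreal_ennreal
    · intro n
      refine Eventually.of_forall fun ω => ?_
      have hb : ‖Z ω - Zn n ω‖ ≤ 2 * ‖Z ω‖ := by
        rw [Real.norm_eq_abs, Real.norm_eq_abs]
        have h1 := trunc_abs_le_s5 n (Z ω)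
        have h2 := abs_sub (Z ω) (Zn n ω)
        simp only [hZndef] at h1 ⊢
        calc |Z ω - Zn n ω| ≤ |Z ω| + |Zn n ω| := abs_sub _ _
          _ ≤ |Z ω| + |Z ω| := by exact add_le_add le_rfl h1
          _ = 2 * |Z ω| := by ring
      calc (‖Z ω - Zn n ω‖₊ : ℝ≥0∞) ≤ (((2:ℝ≥0) * ‖Z ω‖₊ : ℝ≥0) : ℝ≥0∞) := by
            rw [ENNReal.coe_le_coe, ← NNReal.coe_le_coe]
            push_cast
            exact hb
        _ = 2 * (‖Z ω‖₊ : ℝ≥0∞) := by push_cast; ring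
    · rw [lintegral_const_mul 2 hZm.nnnorm.coe_nnreal_ennreal]
      exact ENNReal.mul_ne_top (by norm_num) hZ.2.ne
    · refine Eventually.of_forall fun ω => ?_
      refine Tendsto.congr' ?_ (tendsto_const_nhds : Tendsto (fun _ : ℕ => (0:ℝ≥0∞)) atTop (nhds 0))
      filter_upwards [trunc_eventually (Z ω)] with n hn
      simp only [hZndef, hn, sub_self, nnnorm_zero, ENNReal.coe_zero]
  set F := P[fun ω => W ω * Z ω | mX X] with hF
  set Gf : Ω → ℝ := fun ω => c ω * (P[fun ω => W' ω * Z ω | mX X]) ω with hGf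
  have hFme : AEStronglyMeasurable F P :=
    (stronglyMeasurable_condExp.mono hm).aestronglyMeasurable
  have hGme : AEStronglyMeasurable Gf P :=
    hcm.mul (stronglyMeasurable_condExp.mono hm).aestronglyMeasurable
  have key2 : eLpNorm (fun ω => F ω - Gf ω) 1 P = 0 := by
    have hbound : ∀ n, eLpNorm (fun ω => F ω - Gf ω) 1 P ≤ D n + D n := by
      intro n
      set Fn := P[fun ω => W ω * Zn n ω | mX X] with hFn
      have hFnme : AEStronglyMeasurable Fn P :=
        (stronglyMeasurable_condExp.mono hm).aestronglyMeasurable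
      have h1 : eLpNorm (fun ω => F ω - Fn ω) 1 P ≤ D n := by
        have e1 : (fun ω => F ω - Fn ω)
            =ᵐ[P] P[(fun ω => W ω * Z ω) - (fun ω => W ω * Zn n ω)|mX X] :=
          (condExp_sub hWZ (hWZn n) (mX X)).symm
        rw [eLpNorm_congr_ae e1]
        refine (eLpNorm_one_condExp_le_eLpNorm _).trans ?_
        refine le_trans (eLpNorm_mono_ae (Eventually.of_forall fun ω => ?_)) (le_of_eq rfl)
        simp only [Pi.sub_apply, Real.norm_eq_abs]
        rw [← mul_sub, abs_mul]
        calc |W ω| * |Z ω - Zn n ω| ≤ 1 * |Z ω - Zn n ω| :=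
              mul_le_mul_of_nonneg_right (hWb ω) (abs_nonneg _)
          _ = |Z ω - Zn n ω| := one_mul _
      have h2 : eLpNorm (fun ω => Fn ω - Gf ω) 1 P ≤ D n := by
        have e2 : (fun ω => Fn ω - Gf ω) =ᵐ[P] fun ω =>
            c ω * ((P[fun ω => W' ω * Zn n ω|mX X]) ω - (P[fun ω => W' ω * Z ω|mX X]) ω) := by
          filter_upwards [h n] with ω hω
          simp only [hFn, hGf, hZndef, hω, mul_sub]
        rw [eLpNorm_congr_ae e2]
        have e3 : eLpNorm (fun ω =>
            (P[fun ω => W' ω * Zn n ω|mX X]) ω - (P[fun ω => W' ω * Z ω|mX X]) ω) 1 P ≤ D n := by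
          have e4 : (fun ω => (P[fun ω => W' ω * Zn n ω|mX X]) ω - (P[fun ω => W' ω * Z ω|mX X]) ω)
              =ᵐ[P] P[(fun ω => W' ω * Zn n ω) - (fun ω => W' ω * Z ω)|mX X] :=
            (condExp_sub (hW'Zn n) hW'Z (mX X)).symm
          rw [eLpNorm_congr_ae e4]
          refine (eLpNorm_one_condExp_le_eLpNorm _).trans ?_
          refine eLpNorm_mono_ae (Eventually.of_forall fun ω => ?_)
          simp only [Pi.sub_apply, Real.norm_eq_abs]
          rw [← mul_sub, abs_mul, abs_sub_comm (Zn n ω)]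
          calc |W' ω| * |Z ω - Zn n ω| ≤ 1 * |Z ω - Zn n ω| :=
                mul_le_mul_of_nonneg_right (hW'b ω) (abs_nonneg _)
            _ = |Z ω - Zn n ω| := one_mul _
        refine le_trans ?_ e3
        refine eLpNorm_mono_ae ?_
        filter_upwards [hcb] with ω hcω
        simp only [Real.norm_eq_abs, abs_mul]
        calc |c ω| * |(P[fun ω => W' ω * Zn n ω|mX X]) ω - (P[fun ω => W' ω * Z ω|mX X]) ω|
            ≤ 1 * |(P[fun ω => W' ω * Zn n ω|mX X]) ω - (P[fun ω => W' ω * Z ω|mX X]) ω| :=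
              mul_le_mul_of_nonneg_right hcω (abs_nonneg _)
          _ = _ := one_mul _
      calc eLpNorm (fun ω => F ω - Gf ω) 1 P
          = eLpNorm (fun ω => (F ω - Fn ω) + (Fn ω - Gf ω)) 1 P := by
            congr 1; funext ω; ring
        _ ≤ eLpNorm (fun ω => F ω - Fn ω) 1 P + eLpNorm (fun ω => Fn ω - Gf ω) 1 P :=
            eLpNorm_add_le (hFme.sub hFnme) (hFnme.sub hGme) le_rfl
        _ ≤ D n + D n := add_le_add h1 h2
    have htend2 : Tendsto (fun n => D n + D n) atTop (nhds 0) := by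
      simpa using hDtend.add hDtend
    exact le_zero_iff.mp (ge_of_tendsto htend2 (Eventually.of_forall hbound))
  have hae : (fun ω => F ω - Gf ω) =ᵐ[P] 0 :=
    (eLpNorm_eq_zero_iff (hFme.sub hGme) one_ne_zero).mp key2
  filter_upwards [hae] with ω hω
  have : F ω - Gf ω = 0 := hω
  exact sub_eq_zero.mp this

theorem double_robustness_outcome_side
    {Ω : Type*} [MeasurableSpace Ω] (P : Measure Ω) [IsProbabilityMeasure P]
    (X A G Y0 Y1 Y : Ω → ℝ)
    (hX : Measurable X) (hA : Measurable A) (hG : Measurable G)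
    (hY0m : Measurable Y0) (hY1m : Measurable Y1)
    (hY0 : Integrable Y0 P) (hY1 : Integrable Y1 P)
    (hAbin : ∀ ω, A ω = 0 ∨ A ω = 1) (hGbin : ∀ ω, G ω = 0 ∨ G ω = 1)
    (hcons : ∀ ω, Y ω = A ω * Y1 ω + (1 - A ω) * Y0 ω)
    (e1 π μ0 μ1 : ℝ → ℝ)
    (he1m : Measurable e1) (hπm : Measurable π)
    (hμ0m : Measurable μ0) (hμ1m : Measurable μ1)
    (hπ : (fun ω => π (X ω)) =ᵐ[P] P[G | mX X])
    (he1 : (fun ω => e1 (X ω) * π (X ω)) =ᵐ[P] P[fun ω => A ω * G ω | mX X])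
    (hpose : ∀ᵐ ω ∂P, 0 < e1 (X ω) ∧ e1 (X ω) < 1)
    (hposπ : ∀ᵐ ω ∂P, 0 < π (X ω) ∧ π (X ω) < 1)
    (hunconf : ∀ f : ℝ × ℝ → ℝ, Measurable f → (∃ C, ∀ p, |f p| ≤ C) →
      P[fun ω => G ω * A ω * f (Y0 ω, Y1 ω) | mX X]
        =ᵐ[P] fun ω => e1 (X ω) * (P[fun ω => G ω * f (Y0 ω, Y1 ω) | mX X]) ω)
    (htrans : ∀ f : ℝ × ℝ → ℝ, Measurable f → (∃ C, ∀ p, |f p| ≤ C) →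
      P[fun ω => G ω * f (Y0 ω, Y1 ω) | mX X]
        =ᵐ[P] fun ω => π (X ω) * (P[fun ω => f (Y0 ω, Y1 ω) | mX X]) ω)
    (hμ1 : (fun ω => μ1 (X ω) * e1 (X ω) * π (X ω)) =ᵐ[P]
      P[fun ω => A ω * G ω * Y ω | mX X])
    (hμ0 : (fun ω => μ0 (X ω) * (1 - e1 (X ω)) * π (X ω)) =ᵐ[P]
      P[fun ω => (1 - A ω) * G ω * Y ω | mX X])
    (q τ : ℝ)
    (hq : q = (P {ω | G ω = 1}).toReal) (hq0 : 0 < q) (hq1 : q < 1)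
    (hτ : τ = (∫ ω, (1 - G ω) * (Y1 ω - Y0 ω) ∂P) / (1 - q))
    (m0f m1f : ℝ → ℝ) (hm0f : Measurable m0f) (hm1f : Measurable m1f)
    (hm0b : ∃ C, ∀ x, |m0f x| ≤ C) (hm1b : ∃ C, ∀ x, |m1f x| ≤ C)
    (φ : Ω → ℝ)
    (hφ : ∀ ω, φ ω =
      G ω / (1 - q) * ((1 - π (X ω)) / π (X ω)) *
        (A ω * (Y ω - m1f (X ω)) / e1 (X ω)
          - (1 - A ω) * (Y ω - m0f (X ω)) / (1 - e1 (X ω)))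
      + (1 - G ω) / (1 - q) * (m1f (X ω) - m0f (X ω)))
    (hφint : Integrable φ P) :
    ∫ ω, φ ω ∂P = τ := by
  have hm : mX X ≤ ‹MeasurableSpace Ω› := hX.comap_le
  haveI : IsFiniteMeasure (P.trim hm) := isFiniteMeasure_trim hm
  have hXm : Measurable[mX X] X := Measurable.of_comap_le le_rfl
  have hsm : ∀ {g : ℝ → ℝ}, Measurable g → StronglyMeasurable[mX X] fun ω => g (X ω) :=
    fun hg => (Measurable.stronglyMeasurable (hg.comp hXm))
  have hq1' : (0:ℝ) < 1 - q := by linarith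
  have hq1ne : (1:ℝ) - q ≠ 0 := ne_of_gt hq1'
  have hAb : ∀ ω, |A ω| ≤ 1 := fun ω => by rcases hAbin ω with h | h <;> rw [h] <;> norm_num
  have hGb : ∀ ω, |G ω| ≤ 1 := fun ω => by rcases hGbin ω with h | h <;> rw [h] <;> norm_num
  -- basic measurability / integrability
  have hYm : Measurable Y := by
    have hYe : Y = fun ω => A ω * Y1 ω + (1 - A ω) * Y0 ω := funext hcons
    rw [hYe]; exact (hA.mul hY1m).add ((measurable_const.sub hA).mul hY0m)
  have hYabs : ∀ ω, |Y ω| ≤ |Y1 ω| + |Y0 ω| := by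
    intro ω; rw [hcons ω]
    rcases hAbin ω with h | h
    · rw [h, show (0:ℝ) * Y1 ω + (1 - 0) * Y0 ω = Y0 ω from by ring]
      exact le_add_of_nonneg_left (abs_nonneg _)
    · rw [h, show (1:ℝ) * Y1 ω + (1 - 1) * Y0 ω = Y1 ω from by ring]
      exact le_add_of_nonneg_right (abs_nonneg _)
  have hYint : Integrable Y P := by
    refine (hY1.abs.add hY0.abs).mono' hYm.aestronglyMeasurable
      (Eventually.of_forall fun ω => ?_)
    rw [Real.norm_eq_abs]; exact hYabs ω
  have hbint : ∀ (f : Ω → ℝ), AEStronglyMeasurable f P → ∀ C : ℝ, (∀ ω, |f ω| ≤ C) →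
      Integrable f P := fun f hf C hC => (integrable_const C).mono' hf
    (Eventually.of_forall fun ω => by rw [Real.norm_eq_abs]; exact hC ω)
  have hwint : ∀ (V : Ω → ℝ), Measurable V → (∀ ω, |V ω| ≤ 1) → ∀ g : Ω → ℝ,
      Measurable g → Integrable g P → Integrable (fun ω => V ω * g ω) P := by
    intro V hV hVb g hg hgi
    refine hgi.abs.mono' (hV.mul hg).aestronglyMeasurable (Eventually.of_forall fun ω => ?_)
    rw [Real.norm_eq_abs, abs_mul]
    calc |V ω| * |g ω| ≤ 1 * |g ω| := mul_le_mul_of_nonneg_right (hVb ω) (abs_nonneg _)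
      _ = |g ω| := one_mul _
  -- conditional expectation limit facts
  have he1b : ∀ᵐ ω ∂P, |e1 (X ω)| ≤ 1 := by
    filter_upwards [hpose] with ω h; rw [abs_of_pos h.1]; exact le_of_lt h.2
  have hπb : ∀ᵐ ω ∂P, |π (X ω)| ≤ 1 := by
    filter_upwards [hposπ] with ω h; rw [abs_of_pos h.1]; exact le_of_lt h.2
  have hGAb : ∀ ω, |G ω * A ω| ≤ 1 := fun ω => by
    rw [abs_mul]
    calc |G ω| * |A ω| ≤ 1 * 1 := mul_le_mul (hGb ω) (hAb ω) (abs_nonneg _) zero_le_one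
      _ = 1 := one_mul _
  have hone : ∀ ω : Ω, |(1:ℝ)| ≤ 1 := fun _ => by norm_num
  have hcl1 : P[fun ω => G ω * A ω * Y1 ω | mX X]
      =ᵐ[P] fun ω => e1 (X ω) * (P[fun ω => G ω * Y1 ω | mX X]) ω := by
    refine condexp_trunc_limit P X hX (fun ω => G ω * A ω) G (fun ω => e1 (X ω)) Y1
      (hG.mul hA) hG hGAb hGb ((he1m.comp hX).aestronglyMeasurable) he1b hY1m hY1 ?_
    intro n
    exact hunconf (fun p => max (min p.2 (n:ℝ)) (-(n:ℝ)))
      ((measurable_snd.min measurable_const).max measurable_const) (trunc_bdd n _)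
  have hcl2 : P[fun ω => G ω * Y1 ω | mX X]
      =ᵐ[P] fun ω => π (X ω) * (P[Y1 | mX X]) ω := by
    have heq1 : (fun ω => (1:ℝ) * Y1 ω) = Y1 := funext fun ω => one_mul _
    have step : P[fun ω => G ω * Y1 ω | mX X]
        =ᵐ[P] fun ω => π (X ω) * (P[fun ω => (1:ℝ) * Y1 ω | mX X]) ω := by
      refine condexp_trunc_limit P X hX G (fun _ => (1:ℝ)) (fun ω => π (X ω)) Y1
        hG measurable_const hGb hone ((hπm.comp hX).aestronglyMeasurable) hπb hY1m hY1 ?_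
      intro n
      have heq2 : (fun ω => (1:ℝ) * max (min (Y1 ω) (n:ℝ)) (-(n:ℝ)))
          = fun ω => max (min (Y1 ω) (n:ℝ)) (-(n:ℝ)) := funext fun ω => one_mul _
      rw [heq2]
      exact htrans (fun p => max (min p.2 (n:ℝ)) (-(n:ℝ)))
        ((measurable_snd.min measurable_const).max measurable_const) (trunc_bdd n _)
    rwa [heq1] at step
  have hcl0u : P[fun ω => G ω * A ω * Y0 ω | mX X]
      =ᵐ[P] fun ω => e1 (X ω) * (P[fun ω => G ω * Y0 ω | mX X]) ω := by
    refine condexp_trunc_limit P X hX (fun ω => G ω * A ω) G (fun ω => e1 (X ω)) Y0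
      (hG.mul hA) hG hGAb hGb ((he1m.comp hX).aestronglyMeasurable) he1b hY0m hY0 ?_
    intro n
    exact hunconf (fun p => max (min p.1 (n:ℝ)) (-(n:ℝ)))
      ((measurable_fst.min measurable_const).max measurable_const) (trunc_bdd n _)
  have hcl0t : P[fun ω => G ω * Y0 ω | mX X]
      =ᵐ[P] fun ω => π (X ω) * (P[Y0 | mX X]) ω := by
    have heq1 : (fun ω => (1:ℝ) * Y0 ω) = Y0 := funext fun ω => one_mul _
    have step : P[fun ω => G ω * Y0 ω | mX X]
        =ᵐ[P] fun ω => π (X ω) * (P[fun ω => (1:ℝ) * Y0 ω | mX X]) ω := by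
      refine condexp_trunc_limit P X hX G (fun _ => (1:ℝ)) (fun ω => π (X ω)) Y0
        hG measurable_const hGb hone ((hπm.comp hX).aestronglyMeasurable) hπb hY0m hY0 ?_
      intro n
      have heq2 : (fun ω => (1:ℝ) * max (min (Y0 ω) (n:ℝ)) (-(n:ℝ)))
          = fun ω => max (min (Y0 ω) (n:ℝ)) (-(n:ℝ)) := funext fun ω => one_mul _
      rw [heq2]
      exact htrans (fun p => max (min p.1 (n:ℝ)) (-(n:ℝ)))
        ((measurable_fst.min measurable_const).max measurable_const) (trunc_bdd n _)
    rwa [heq1] at step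
  -- identification of μ1, μ0 with conditional expectations
  have hAGY_eq : (fun ω => A ω * G ω * Y ω) = fun ω => G ω * A ω * Y1 ω :=
    funext fun ω => by rcases hAbin ω with h | h <;> rw [hcons ω, h] <;> ring
  have hmu1E : (fun ω => μ1 (X ω)) =ᵐ[P] P[Y1 | mX X] := by
    have t1 : (fun ω => μ1 (X ω) * e1 (X ω) * π (X ω))
        =ᵐ[P] fun ω => e1 (X ω) * (π (X ω) * (P[Y1 | mX X]) ω) := by
      refine hμ1.trans ?_
      calc P[fun ω => A ω * G ω * Y ω | mX X]
          = P[fun ω => G ω * A ω * Y1 ω | mX X] := by rw [hAGY_eq]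
        _ =ᵐ[P] fun ω => e1 (X ω) * (P[fun ω => G ω * Y1 ω | mX X]) ω := hcl1
        _ =ᵐ[P] fun ω => e1 (X ω) * (π (X ω) * (P[Y1 | mX X]) ω) := by
            filter_upwards [hcl2] with ω hω; rw [hω]
    filter_upwards [t1, hpose, hposπ] with ω h1 h2 h3
    have h4 : (e1 (X ω) * π (X ω)) * μ1 (X ω)
        = (e1 (X ω) * π (X ω)) * (P[Y1 | mX X]) ω := by linear_combination h1
    exact mul_left_cancel₀ (mul_ne_zero (ne_of_gt h2.1) (ne_of_gt h3.1)) h4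
  have hGY0int : Integrable (fun ω => G ω * Y0 ω) P := hwint G hG hGb Y0 hY0m hY0
  have hGY1int : Integrable (fun ω => G ω * Y1 ω) P := hwint G hG hGb Y1 hY1m hY1
  have hGAY0int : Integrable (fun ω => G ω * A ω * Y0 ω) P :=
    hwint _ (hG.mul hA) hGAb Y0 hY0m hY0
  have hGY0AY0 : (fun ω => (1 - A ω) * G ω * Y ω)
      = fun ω => G ω * Y0 ω - G ω * A ω * Y0 ω :=
    funext fun ω => by rcases hAbin ω with h | h <;> rw [hcons ω, h] <;> ring
  have hmu0E : (fun ω => μ0 (X ω)) =ᵐ[P] P[Y0 | mX X] := by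
    have t0 : (fun ω => μ0 (X ω) * (1 - e1 (X ω)) * π (X ω))
        =ᵐ[P] fun ω => (1 - e1 (X ω)) * (π (X ω) * (P[Y0 | mX X]) ω) := by
      refine hμ0.trans ?_
      calc P[fun ω => (1 - A ω) * G ω * Y ω | mX X]
          = P[(fun ω => G ω * Y0 ω) - fun ω => G ω * A ω * Y0 ω | mX X] := by
            rw [hGY0AY0]; rfl
        _ =ᵐ[P] P[fun ω => G ω * Y0 ω | mX X] - P[fun ω => G ω * A ω * Y0 ω | mX X] :=
            condExp_sub hGY0int hGAY0int (mX X)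
        _ =ᵐ[P] fun ω => (1 - e1 (X ω)) * (π (X ω) * (P[Y0 | mX X]) ω) := by
            filter_upwards [hcl0t, hcl0u] with ω ha hb
            simp only [Pi.sub_apply]
            rw [hb, ha]; ring
    filter_upwards [t0, hpose, hposπ] with ω h1 h2 h3
    have h4 : ((1 - e1 (X ω)) * π (X ω)) * μ0 (X ω)
        = ((1 - e1 (X ω)) * π (X ω)) * (P[Y0 | mX X]) ω := by linear_combination h1
    exact mul_left_cancel₀
      (mul_ne_zero (ne_of_gt (by linarith [h2.2])) (ne_of_gt h3.1)) h4
  -- decomposition of φ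
  obtain ⟨C1, hC1⟩ := hm1b
  obtain ⟨C0, hC0⟩ := hm0b
  have hC1nn : 0 ≤ C1 := le_trans (abs_nonneg _) (hC1 0)
  have hC0nn : 0 ≤ C0 := le_trans (abs_nonneg _) (hC0 0)
  set h1 : Ω → ℝ := fun ω => (1 - π (X ω)) / ((1 - q) * π (X ω) * e1 (X ω)) with hh1
  set h2 : Ω → ℝ := fun ω => (1 - π (X ω)) / ((1 - q) * π (X ω) * (1 - e1 (X ω))) with hh2
  set Z1 : Ω → ℝ := fun ω => A ω * G ω * (Y ω - m1f (X ω)) with hZ1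
  set Z2 : Ω → ℝ := fun ω => (1 - A ω) * G ω * (Y ω - m0f (X ω)) with hZ2
  set k : Ω → ℝ := fun ω => (m1f (X ω) - m0f (X ω)) / (1 - q) with hk
  set oneG : Ω → ℝ := fun ω => 1 - G ω with honeG
  have h1m : Measurable h1 := (measurable_const.sub (hπm.comp hX)).div
    (((measurable_const.mul (hπm.comp hX))).mul (he1m.comp hX))
  have h2m : Measurable h2 := (measurable_const.sub (hπm.comp hX)).div
    (((measurable_const.mul (hπm.comp hX))).mul (measurable_const.sub (he1m.comp hX)))
  have hZ1m : Measurable Z1 := (hA.mul hG).mul (hYm.sub (hm1f.comp hX))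
  have hZ2m : Measurable Z2 := ((measurable_const.sub hA).mul hG).mul
    (hYm.sub (hm0f.comp hX))
  have hkm : Measurable k := ((hm1f.comp hX).sub (hm0f.comp hX)).div measurable_const
  have hAGb : ∀ ω, |A ω * G ω| ≤ 1 := fun ω => by
    rw [abs_mul]
    calc |A ω| * |G ω| ≤ 1 * 1 := mul_le_mul (hAb ω) (hGb ω) (abs_nonneg _) zero_le_one
      _ = 1 := one_mul _
  have hInAGb : ∀ ω, |(1 - A ω) * G ω| ≤ 1 := fun ω => by
    rcases hAbin ω with h | h <;> rw [h]
    · rw [show ((1:ℝ) - 0) * G ω = G ω from by ring]; exact hGb ω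
    · rw [show ((1:ℝ) - 1) * G ω = 0 from by ring]; norm_num
  have hm1Xint : Integrable (fun ω => m1f (X ω)) P :=
    hbint _ ((hm1f.comp hX)).aestronglyMeasurable C1 fun ω => hC1 _
  have hm0Xint : Integrable (fun ω => m0f (X ω)) P :=
    hbint _ ((hm0f.comp hX)).aestronglyMeasurable C0 fun ω => hC0 _
  have hZ1int : Integrable Z1 P :=
    hwint _ (hA.mul hG) hAGb _ (hYm.sub (hm1f.comp hX)) (hYint.sub hm1Xint)
  have hZ2int : Integrable Z2 P :=
    hwint _ ((measurable_const.sub hA).mul hG) hInAGb _ (hYm.sub (hm0f.comp hX))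
      (hYint.sub hm0Xint)
  have hF3int : Integrable (fun ω => k ω * oneG ω) P := by
    refine hbint _ ((hkm.mul (measurable_const.sub hG))).aestronglyMeasurable
      ((C1 + C0) / (1 - q)) fun ω => ?_
    rw [hk, honeG, abs_mul, abs_div]
    have hb1 : |m1f (X ω) - m0f (X ω)| ≤ C1 + C0 :=
      (abs_sub _ _).trans (add_le_add (hC1 _) (hC0 _))
    have hb2 : |1 - G ω| ≤ 1 := by
      rcases hGbin ω with h | h <;> rw [h] <;> norm_num
    rw [abs_of_pos hq1']
    calc |m1f (X ω) - m0f (X ω)| / (1 - q) * |1 - G ω|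
        ≤ (C1 + C0) / (1 - q) * 1 :=
          mul_le_mul ((div_le_div_iff_of_pos_right hq1').mpr hb1) hb2 (abs_nonneg _) (by positivity)
      _ = (C1 + C0) / (1 - q) := mul_one _
  have hdiff : Integrable (fun ω => h1 ω * Z1 ω - h2 ω * Z2 ω) P := by
    have hde : (fun ω => h1 ω * Z1 ω - h2 ω * Z2 ω) = fun ω => φ ω - k ω * oneG ω :=
      funext fun ω => by
        simp only [hh1, hh2, hZ1, hZ2, hk, honeG]
        rw [hφ ω]
        simp only [div_eq_mul_inv, mul_inv]
        ring
    rw [hde]; exact hφint.sub hF3int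
  have hF1int : Integrable (fun ω => h1 ω * Z1 ω) P := by
    refine hdiff.abs.mono' (h1m.mul hZ1m).aestronglyMeasurable
      (Eventually.of_forall fun ω => ?_)
    rw [Real.norm_eq_abs]
    simp only [hZ1, hZ2]
    rcases hAbin ω with h | h
    · rw [h, show h1 ω * (0 * G ω * (Y ω - m1f (X ω))) = 0 from by ring, abs_zero]
      exact abs_nonneg _
    · apply le_of_eq
      rw [h]
      congr 1
      ring
  have hF2int : Integrable (fun ω => h2 ω * Z2 ω) P := by
    have hde : (fun ω => h2 ω * Z2 ω)
        = fun ω => h1 ω * Z1 ω - (h1 ω * Z1 ω - h2 ω * Z2 ω) := funext fun ω => by ring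
    rw [hde]; exact hF1int.sub hdiff
  -- strong measurability over mX X
  have h1sm : StronglyMeasurable[mX X] h1 := by
    rw [hh1]
    exact hsm ((measurable_const.sub hπm).div ((measurable_const.mul hπm).mul he1m))
  have h2sm : StronglyMeasurable[mX X] h2 := by
    rw [hh2]
    exact hsm ((measurable_const.sub hπm).div
      ((measurable_const.mul hπm).mul (measurable_const.sub he1m)))
  have ksm : StronglyMeasurable[mX X] k := by
    rw [hk]; exact hsm ((hm1f.sub hm0f).div measurable_const)
  -- more integrability
  have hGint : Integrable G P := hbint _ hG.aestronglyMeasurable 1 hGb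
  have hAGint : Integrable (fun ω => A ω * G ω) P :=
    hbint _ (hA.mul hG).aestronglyMeasurable 1 hAGb
  have hInAGint : Integrable (fun ω => (1 - A ω) * G ω) P :=
    hbint _ ((measurable_const.sub hA).mul hG).aestronglyMeasurable 1 hInAGb
  have hInGb : ∀ ω, |1 - G ω| ≤ 1 := fun ω => by
    rcases hGbin ω with h | h <;> rw [h] <;> norm_num
  have honeGint : Integrable oneG P := by
    rw [honeG]; exact hbint _ (measurable_const.sub hG).aestronglyMeasurable 1 hInGb
  have hAGYint : Integrable (fun ω => A ω * G ω * Y ω) P :=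
    hwint _ (hA.mul hG) hAGb Y hYm hYint
  have hInAGYint : Integrable (fun ω => (1 - A ω) * G ω * Y ω) P :=
    hwint _ ((measurable_const.sub hA).mul hG) hInAGb Y hYm hYint
  have hm1AGint : Integrable (fun ω => m1f (X ω) * (A ω * G ω)) P := by
    refine hbint _ ((hm1f.comp hX).mul (hA.mul hG)).aestronglyMeasurable C1 fun ω => ?_
    rw [abs_mul]
    calc |m1f (X ω)| * |A ω * G ω| ≤ C1 * 1 :=
          mul_le_mul (hC1 _) (hAGb ω) (abs_nonneg _) hC1nn
      _ = C1 := mul_one _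
  have hm0InAGint : Integrable (fun ω => m0f (X ω) * ((1 - A ω) * G ω)) P := by
    refine hbint _ ((hm0f.comp hX).mul
      ((measurable_const.sub hA).mul hG)).aestronglyMeasurable C0 fun ω => ?_
    rw [abs_mul]
    calc |m0f (X ω)| * |(1 - A ω) * G ω| ≤ C0 * 1 :=
          mul_le_mul (hC0 _) (hInAGb ω) (abs_nonneg _) hC0nn
      _ = C0 := mul_one _
  -- conditional expectation computations
  have hφeq2 : φ = ((fun ω => h1 ω * Z1 ω) - fun ω => h2 ω * Z2 ω) + fun ω => k ω * oneG ω :=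
    funext fun ω => by
      simp only [Pi.add_apply, Pi.sub_apply, hh1, hh2, hZ1, hZ2, hk, honeG]
      rw [hφ ω]
      simp only [div_eq_mul_inv, mul_inv]
      ring
  have e_split : P[φ | mX X] =ᵐ[P] fun ω => (P[fun ω => h1 ω * Z1 ω | mX X]) ω
      - (P[fun ω => h2 ω * Z2 ω | mX X]) ω + (P[fun ω => k ω * oneG ω | mX X]) ω := by
    rw [hφeq2]
    exact (condExp_add hdiff hF3int (mX X)).trans
      (EventuallyEq.add (condExp_sub hF1int hF2int (mX X)) EventuallyEq.rfl)
  have eF1 : P[fun ω => h1 ω * Z1 ω | mX X] =ᵐ[P] fun ω => h1 ω * (P[Z1 | mX X]) ω :=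
    condExp_mul_of_stronglyMeasurable_left h1sm hF1int hZ1int
  have eF2 : P[fun ω => h2 ω * Z2 ω | mX X] =ᵐ[P] fun ω => h2 ω * (P[Z2 | mX X]) ω :=
    condExp_mul_of_stronglyMeasurable_left h2sm hF2int hZ2int
  have eF3 : P[fun ω => k ω * oneG ω | mX X] =ᵐ[P] fun ω => k ω * (P[oneG | mX X]) ω :=
    condExp_mul_of_stronglyMeasurable_left ksm hF3int honeGint
  have hZ1split : Z1 = (fun ω => A ω * G ω * Y ω) - fun ω => m1f (X ω) * (A ω * G ω) :=
    funext fun ω => by simp only [hZ1, Pi.sub_apply]; ring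
  have eZ1 : P[Z1 | mX X] =ᵐ[P]
      fun ω => μ1 (X ω) * e1 (X ω) * π (X ω) - m1f (X ω) * (e1 (X ω) * π (X ω)) := by
    rw [hZ1split]
    refine (condExp_sub hAGYint hm1AGint (mX X)).trans ?_
    have p2 : P[fun ω => m1f (X ω) * (A ω * G ω) | mX X]
        =ᵐ[P] fun ω => m1f (X ω) * (P[fun ω => A ω * G ω | mX X]) ω :=
      condExp_mul_of_stronglyMeasurable_left (hsm hm1f) hm1AGint hAGint
    filter_upwards [hμ1.symm, p2, he1] with ω a b c
    simp only [Pi.sub_apply]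
    rw [a, b, ← c]
  have eInAG : P[fun ω => (1 - A ω) * G ω | mX X]
      =ᵐ[P] fun ω => π (X ω) - e1 (X ω) * π (X ω) := by
    have hsp : (fun ω => (1 - A ω) * G ω) = G - fun ω => A ω * G ω :=
      funext fun ω => by simp only [Pi.sub_apply]; ring
    rw [hsp]
    refine (condExp_sub hGint hAGint (mX X)).trans ?_
    filter_upwards [hπ, he1] with ω a b
    simp only [Pi.sub_apply]
    rw [← a, ← b]
  have hZ2split : Z2 = (fun ω => (1 - A ω) * G ω * Y ω)
      - fun ω => m0f (X ω) * ((1 - A ω) * G ω) :=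
    funext fun ω => by simp only [hZ2, Pi.sub_apply]; ring
  have eZ2 : P[Z2 | mX X] =ᵐ[P] fun ω => μ0 (X ω) * (1 - e1 (X ω)) * π (X ω)
      - m0f (X ω) * (π (X ω) - e1 (X ω) * π (X ω)) := by
    rw [hZ2split]
    refine (condExp_sub hInAGYint hm0InAGint (mX X)).trans ?_
    have p2 : P[fun ω => m0f (X ω) * ((1 - A ω) * G ω) | mX X]
        =ᵐ[P] fun ω => m0f (X ω) * (P[fun ω => (1 - A ω) * G ω | mX X]) ω :=
      condExp_mul_of_stronglyMeasurable_left (hsm hm0f) hm0InAGint hInAGint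
    filter_upwards [hμ0.symm, p2, eInAG] with ω a b c
    simp only [Pi.sub_apply]
    rw [a, b, c]
  have eoneG : P[oneG | mX X] =ᵐ[P] fun ω => 1 - π (X ω) := by
    have hsp : oneG = (fun _ => (1:ℝ)) - G := funext fun ω => by
      simp only [honeG, Pi.sub_apply]
    rw [hsp]
    refine (condExp_sub (integrable_const 1) hGint (mX X)).trans ?_
    filter_upwards [hπ] with ω a
    simp only [Pi.sub_apply, condExp_const (μ := P) hm (1:ℝ)]
    rw [← a]
  have ePhi : P[φ | mX X] =ᵐ[P]
      fun ω => (1 - π (X ω)) * ((P[Y1 | mX X]) ω - (P[Y0 | mX X]) ω) / (1 - q) := by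
    filter_upwards [e_split, eF1, eZ1, eF2, eZ2, eF3, eoneG, hmu1E, hmu0E, hpose, hposπ]
      with ω hs a1 b1 a2 b2 a3 b3 hm1e hm0e hp1 hp2
    rw [hs, a1, b1, a2, b2, a3, b3, hh1, hh2, hk]
    rw [show μ1 (X ω) = (P[Y1 | mX X]) ω from hm1e, show μ0 (X ω) = (P[Y0 | mX X]) ω from hm0e]
    have he1ne : e1 (X ω) ≠ 0 := ne_of_gt hp1.1
    have he1ne' : 1 - e1 (X ω) ≠ 0 := ne_of_gt (by linarith [hp1.2])
    have hπne : π (X ω) ≠ 0 := ne_of_gt hp2.1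
    field_simp
    ring
  -- right-hand side
  have hGY1GY0int : Integrable (fun ω => G ω * Y1 ω - G ω * Y0 ω) P := hGY1int.sub hGY0int
  have hDsplit : (fun ω => (1 - G ω) * (Y1 ω - Y0 ω))
      = (fun ω => Y1 ω - Y0 ω) - fun ω => G ω * Y1 ω - G ω * Y0 ω :=
    funext fun ω => by simp only [Pi.sub_apply]; ring
  have eD : P[fun ω => (1 - G ω) * (Y1 ω - Y0 ω) | mX X]
      =ᵐ[P] fun ω => (1 - π (X ω)) * ((P[Y1 | mX X]) ω - (P[Y0 | mX X]) ω) := by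
    rw [hDsplit]
    refine (condExp_sub (hY1.sub hY0) hGY1GY0int (mX X)).trans ?_
    have p1 : P[Y1 - Y0 | mX X] =ᵐ[P] P[Y1 | mX X] - P[Y0 | mX X] :=
      condExp_sub hY1 hY0 (mX X)
    have p2 : P[fun ω => G ω * Y1 ω - G ω * Y0 ω | mX X]
        =ᵐ[P] P[fun ω => G ω * Y1 ω | mX X] - P[fun ω => G ω * Y0 ω | mX X] :=
      condExp_sub hGY1int hGY0int (mX X)
    filter_upwards [p1, p2, hcl2, hcl0t] with ω a b c d
    simp only [Pi.sub_apply] at a b ⊢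
    rw [a, b, c, d]
    ring
  have hRHS : ∫ ω, (1 - G ω) * (Y1 ω - Y0 ω) ∂P
      = ∫ ω, (1 - π (X ω)) * ((P[Y1 | mX X]) ω - (P[Y0 | mX X]) ω) ∂P :=
    calc ∫ ω, (1 - G ω) * (Y1 ω - Y0 ω) ∂P
        = ∫ ω, (P[fun ω => (1 - G ω) * (Y1 ω - Y0 ω) | mX X]) ω ∂P :=
          (integral_condExp hm).symm
      _ = _ := integral_congr_ae eD
  calc ∫ ω, φ ω ∂P = ∫ ω, (P[φ | mX X]) ω ∂P := (integral_condExp hm).symm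
    _ = ∫ ω, (1 - π (X ω)) * ((P[Y1 | mX X]) ω - (P[Y0 | mX X]) ω) / (1 - q) ∂P :=
        integral_congr_ae ePhi
    _ = (∫ ω, (1 - π (X ω)) * ((P[Y1 | mX X]) ω - (P[Y0 | mX X]) ω) ∂P) / (1 - q) :=
        integral_div _ _
    _ = (∫ ω, (1 - G ω) * (Y1 ω - Y0 ω) ∂P) / (1 - q) := by rw [hRHS]
    _ = τ := hτ.symm
end

section
/- Knowing the sampling score strictly improves efficiency: in setting I, the efficiency bound with known π(X) differs from the bound with unknown π(X) by E[ (μ1(X)−μ0(X)−τ)² π(X)(1−π(X)) ] / (1−q)², which is nonnegative, and is zero iff μ1(X)−μ0(X) = τ almost surely. -/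
open MeasureTheory ProbabilityTheory

lemma helper_int_eq {Ω : Type*} [mΩ : MeasurableSpace Ω] {P : Measure Ω} [IsProbabilityMeasure P]
    {m : MeasurableSpace Ω} (hm : m ≤ mΩ) {b g k : Ω → ℝ}
    (hb : StronglyMeasurable[m] b)
    (hbg : Integrable (fun ω => b ω * g ω) P) (hg : Integrable g P)
    (hk : k =ᵐ[P] P[g|m]) :
    Integrable (fun ω => b ω * k ω) P ∧ ∫ ω, b ω * g ω ∂P = ∫ ω, b ω * k ω ∂P := by
  have hmul : P[fun ω => b ω * g ω|m] =ᵐ[P] fun ω => b ω * (P[g|m]) ω :=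
    condExp_mul_of_stronglyMeasurable_left hb hbg hg
  have h2 : (fun ω => b ω * k ω) =ᵐ[P] P[fun ω => b ω * g ω|m] := by
    filter_upwards [hmul, hk] with ω h1 h2
    simp only [h1, h2]
  refine ⟨integrable_condExp.congr h2.symm, ?_⟩
  calc ∫ ω, b ω * g ω ∂P = ∫ ω, (P[fun ω => b ω * g ω|m]) ω ∂P := (integral_condExp hm).symm
    _ = ∫ ω, b ω * k ω ∂P := integral_congr_ae h2.symm
theorem known_sampling_score_efficiency_gain
    {Ω : Type*} [MeasurableSpace Ω] (P : Measure Ω) [IsProbabilityMeasure P]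
    (X A G Y0 Y1 Y : Ω → ℝ)
    (hX : Measurable X) (hA : Measurable A) (hG : Measurable G)
    (hY0m : Measurable Y0) (hY1m : Measurable Y1)
    (hY0 : Integrable Y0 P) (hY1 : Integrable Y1 P)
    (hAbin : ∀ ω, A ω = 0 ∨ A ω = 1) (hGbin : ∀ ω, G ω = 0 ∨ G ω = 1)
    (hcons : ∀ ω, Y ω = A ω * Y1 ω + (1 - A ω) * Y0 ω)
    (e1 π μ0 μ1 : ℝ → ℝ)
    (he1m : Measurable e1) (hπm : Measurable π)
    (hμ0m : Measurable μ0) (hμ1m : Measurable μ1)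
    (hπ : (fun ω => π (X ω)) =ᵐ[P] P[G | mX X])
    (he1 : (fun ω => e1 (X ω) * π (X ω)) =ᵐ[P] P[fun ω => A ω * G ω | mX X])
    (hpose : ∀ᵐ ω ∂P, 0 < e1 (X ω) ∧ e1 (X ω) < 1)
    (hposπ : ∀ᵐ ω ∂P, 0 < π (X ω) ∧ π (X ω) < 1)
    (hunconf : ∀ f : ℝ × ℝ → ℝ, Measurable f → (∃ C, ∀ p, |f p| ≤ C) →
      P[fun ω => G ω * A ω * f (Y0 ω, Y1 ω) | mX X]
        =ᵐ[P] fun ω => e1 (X ω) * (P[fun ω => G ω * f (Y0 ω, Y1 ω) | mX X]) ω)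
    (htrans : ∀ f : ℝ × ℝ → ℝ, Measurable f → (∃ C, ∀ p, |f p| ≤ C) →
      P[fun ω => G ω * f (Y0 ω, Y1 ω) | mX X]
        =ᵐ[P] fun ω => π (X ω) * (P[fun ω => f (Y0 ω, Y1 ω) | mX X]) ω)
    (hμ1 : (fun ω => μ1 (X ω) * e1 (X ω) * π (X ω)) =ᵐ[P]
      P[fun ω => A ω * G ω * Y ω | mX X])
    (hμ0 : (fun ω => μ0 (X ω) * (1 - e1 (X ω)) * π (X ω)) =ᵐ[P]
      P[fun ω => (1 - A ω) * G ω * Y ω | mX X])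
    (q τ : ℝ)
    (hq : q = (P {ω | G ω = 1}).toReal) (hq0 : 0 < q) (hq1 : q < 1)
    (hτ : τ = (∫ ω, (1 - G ω) * (Y1 ω - Y0 ω) ∂P) / (1 - q))
    (φI : Ω → ℝ)
    (hφI : ∀ ω, φI ω =
      G ω / (1 - q) * ((1 - π (X ω)) / π (X ω)) *
        (A ω * (Y ω - μ1 (X ω)) / e1 (X ω)
          - (1 - A ω) * (Y ω - μ0 (X ω)) / (1 - e1 (X ω)))
      + (1 - G ω) / (1 - q) * (μ1 (X ω) - μ0 (X ω) - τ))
    (hφIsq : Integrable (fun ω => φI ω ^ 2) P)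
    (φK : Ω → ℝ)
    (hφK : ∀ ω, φK ω =
      G ω / (1 - q) * ((1 - π (X ω)) / π (X ω)) *
        (A ω * (Y ω - μ1 (X ω)) / e1 (X ω)
          - (1 - A ω) * (Y ω - μ0 (X ω)) / (1 - e1 (X ω)))
      + (1 - π (X ω)) / (1 - q) * (μ1 (X ω) - μ0 (X ω) - τ))
    (hφKsq : Integrable (fun ω => φK ω ^ 2) P)
    (hgain : Integrable (fun ω =>
      (μ1 (X ω) - μ0 (X ω) - τ) ^ 2 * π (X ω) * (1 - π (X ω))) P) :
    (∫ ω, φI ω ^ 2 ∂P) - (∫ ω, φK ω ^ 2 ∂P)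
      = (∫ ω, (μ1 (X ω) - μ0 (X ω) - τ) ^ 2 * π (X ω) * (1 - π (X ω)) ∂P)
          / (1 - q) ^ 2
    ∧ 0 ≤ (∫ ω, (μ1 (X ω) - μ0 (X ω) - τ) ^ 2 * π (X ω) * (1 - π (X ω)) ∂P)
          / (1 - q) ^ 2
    ∧ ((∫ ω, (μ1 (X ω) - μ0 (X ω) - τ) ^ 2 * π (X ω) * (1 - π (X ω)) ∂P)
          / (1 - q) ^ 2 = 0
        ↔ ∀ᵐ ω ∂P, μ1 (X ω) - μ0 (X ω) = τ) := by
  classical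
  have hm : mX X ≤ ‹MeasurableSpace Ω› := by
    rintro s ⟨t, ht, rfl⟩; exact hX ht
  have hXm : Measurable[mX X] X := fun t ht => ⟨t, ht, rfl⟩
  have hcomp : ∀ {h : ℝ → ℝ}, Measurable h → StronglyMeasurable[mX X] (fun ω => h (X ω)) :=
    fun hh => (hh.comp hXm).stronglyMeasurable
  have hq' : (1 : ℝ) - q ≠ 0 := ne_of_gt (by linarith)
  have hYm : Measurable Y := by
    have h := funext hcons
    rw [h]
    exact (hA.mul hY1m).add ((measurable_const.sub hA).mul hY0m)
  set D : ℝ → ℝ := fun x => μ1 x - μ0 x - τ with hD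
  set c : ℝ → ℝ := fun x => (1 - π x) ^ 2 * D x / (1 - q) / (1 - q) / π x with hc
  set f1 : ℝ → ℝ := fun x => c x / e1 x with hf1
  set f2 : ℝ → ℝ := fun x => -(c x * μ1 x) / e1 x with hf2
  set f3 : ℝ → ℝ := fun x => -(c x / (1 - e1 x)) with hf3
  set f4 : ℝ → ℝ := fun x => c x * μ0 x / (1 - e1 x) with hf4
  set Z : Ω → ℝ := fun ω => f1 (X ω) * (A ω * G ω * Y ω) + f2 (X ω) * (A ω * G ω)
      + f3 (X ω) * ((1 - A ω) * G ω * Y ω) + f4 (X ω) * ((1 - A ω) * G ω) with hZ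
  have hDm : Measurable D := (hμ1m.sub hμ0m).sub measurable_const
  have hcm : Measurable c := by
    exact ((((((measurable_const.sub hπm).pow measurable_const).mul hDm).div
      measurable_const).div measurable_const).div hπm)
  have hf1m : Measurable f1 := hcm.div he1m
  have hf2m : Measurable f2 := (hcm.mul hμ1m).neg.div he1m
  have hf3m : Measurable f3 := (hcm.div (measurable_const.sub he1m)).neg
  have hf4m : Measurable f4 := (hcm.mul hμ0m).div (measurable_const.sub he1m)
  have key : ∀ ω, φI ω ^ 2 - φK ω ^ 2 =
      (1 - G ω) * D (X ω) ^ 2 / (1 - q) / (1 - q)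
        - (1 - π (X ω)) ^ 2 * D (X ω) ^ 2 / (1 - q) / (1 - q) - 2 * Z ω := by
    intro ω
    simp only [hZ, hf1, hf2, hf3, hf4, hc, hD]
    rw [hφI ω, hφK ω, hcons ω]
    rcases hAbin ω with ha | ha <;> rcases hGbin ω with hg | hg <;> rw [ha, hg] <;> ring
  -- integrability of basic pieces
  have hg1i : Integrable (fun ω => A ω * G ω * Y ω) P := by
    refine hY1.abs.mono' ((hA.mul hG).mul hYm).aestronglyMeasurable
      (Filter.Eventually.of_forall fun ω => ?_)
    rw [Real.norm_eq_abs]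
    rcases hAbin ω with ha | ha <;> rcases hGbin ω with hg | hg <;>
      simp [ha, hg, hcons ω, abs_nonneg]
  have hg2i : Integrable (fun ω => A ω * G ω) P := by
    refine (integrable_const (1 : ℝ)).mono' (hA.mul hG).aestronglyMeasurable
      (Filter.Eventually.of_forall fun ω => ?_)
    rcases hAbin ω with ha | ha <;> rcases hGbin ω with hg | hg <;> simp [ha, hg]
  have hg3i : Integrable (fun ω => (1 - A ω) * G ω * Y ω) P := by
    refine hY0.abs.mono' (((measurable_const.sub hA).mul hG).mul hYm).aestronglyMeasurable
      (Filter.Eventually.of_forall fun ω => ?_)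
    rw [Real.norm_eq_abs]
    rcases hAbin ω with ha | ha <;> rcases hGbin ω with hg | hg <;>
      simp [ha, hg, hcons ω, abs_nonneg]
  have hg4i : Integrable (fun ω => (1 - A ω) * G ω) P := by
    refine (integrable_const (1 : ℝ)).mono' ((measurable_const.sub hA).mul hG).aestronglyMeasurable
      (Filter.Eventually.of_forall fun ω => ?_)
    rcases hAbin ω with ha | ha <;> rcases hGbin ω with hg | hg <;> simp [ha, hg]
  have hGi : Integrable G P := by
    refine (integrable_const (1 : ℝ)).mono' hG.aestronglyMeasurable
      (Filter.Eventually.of_forall fun ω => ?_)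
    rcases hGbin ω with hg | hg <;> simp [hg]
  -- conditional expectation identities
  have hk4 : (fun ω => π (X ω) - e1 (X ω) * π (X ω)) =ᵐ[P] P[fun ω => (1 - A ω) * G ω | mX X] := by
    have hEq : (fun ω => (1 - A ω) * G ω) = (G - fun ω => A ω * G ω) := by
      funext ω; simp [Pi.sub_apply]; ring
    rw [hEq]
    refine (Filter.EventuallyEq.sub hπ he1).trans (condExp_sub hGi hg2i _).symm
  have hk5 : (fun ω => 1 - π (X ω)) =ᵐ[P] P[fun ω => 1 - G ω | mX X] := by
    have hEq : (fun ω => 1 - G ω) = ((fun _ => (1:ℝ)) - G) := by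
      funext ω; simp [Pi.sub_apply]
    rw [hEq]
    have h1 : P[(fun _ : Ω => (1:ℝ)) | mX X] = fun _ => (1:ℝ) := condExp_const hm 1
    refine Filter.EventuallyEq.trans ?_ (condExp_sub (integrable_const 1) hGi _).symm
    refine Filter.EventuallyEq.sub ?_ hπ
    rw [h1]
  -- integrability of the three terms in the key decomposition
  have hAint : Integrable (fun ω => (1 - G ω) * D (X ω) ^ 2 / (1 - q) / (1 - q)) P := by
    refine hφIsq.mono' ?_ (Filter.Eventually.of_forall fun ω => ?_)
    · exact ((((measurable_const.sub hG).mul ((hDm.comp hX).pow measurable_const)).div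
        measurable_const).div measurable_const).aestronglyMeasurable
    · rw [Real.norm_eq_abs]
      rcases hGbin ω with hg | hg
      · have e : (1 - G ω) * D (X ω) ^ 2 / (1 - q) / (1 - q) = φI ω ^ 2 := by
          rw [hφI ω, hg, hD]; ring
        rw [e, abs_of_nonneg (sq_nonneg (φI ω))]
      · have e : (1 - G ω) * D (X ω) ^ 2 / (1 - q) / (1 - q) = 0 := by rw [hg]; ring
        rw [e, abs_zero]; exact sq_nonneg _
  have hBint : Integrable (fun ω => (1 - π (X ω)) ^ 2 * D (X ω) ^ 2 / (1 - q) / (1 - q)) P := by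
    have dom : Integrable (fun ω => 2 * φK ω ^ 2 + 2 * φI ω ^ 2) P :=
      (hφKsq.const_mul 2).add (hφIsq.const_mul 2)
    refine dom.mono' ?_ (Filter.Eventually.of_forall fun ω => ?_)
    · exact (((((measurable_const.sub (hπm.comp hX)).pow measurable_const).mul
        ((hDm.comp hX).pow measurable_const)).div measurable_const).div
        measurable_const).aestronglyMeasurable
    · rw [Real.norm_eq_abs]
      rcases hGbin ω with hg | hg
      · have e : (1 - π (X ω)) ^ 2 * D (X ω) ^ 2 / (1 - q) / (1 - q) = φK ω ^ 2 := by
          rw [hφK ω, hg, hD]; ring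
        rw [e, abs_of_nonneg (sq_nonneg (φK ω))]
        nlinarith [sq_nonneg (φI ω), sq_nonneg (φK ω)]
      · have e : (1 - π (X ω)) ^ 2 * D (X ω) ^ 2 / (1 - q) / (1 - q) = (φK ω - φI ω) ^ 2 := by
          rw [hφK ω, hφI ω, hg, hD]; ring
        rw [e, abs_of_nonneg (sq_nonneg _)]
        nlinarith [sq_nonneg (φK ω + φI ω)]
  have hZm : Measurable Z := by
    rw [hZ]
    exact ((((hf1m.comp hX).mul ((hA.mul hG).mul hYm)).add
      ((hf2m.comp hX).mul (hA.mul hG))).add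
      ((hf3m.comp hX).mul (((measurable_const.sub hA).mul hG).mul hYm))).add
      ((hf4m.comp hX).mul ((measurable_const.sub hA).mul hG))
  have hZint : Integrable Z P := by
    have e : Z = fun ω => ((1 - G ω) * D (X ω) ^ 2 / (1 - q) / (1 - q)
        - (1 - π (X ω)) ^ 2 * D (X ω) ^ 2 / (1 - q) / (1 - q)
        - (φI ω ^ 2 - φK ω ^ 2)) / 2 := by
      funext ω; have := key ω; linarith
    rw [e]
    exact ((hAint.sub hBint).sub (hφIsq.sub hφKsq)).div_const 2
  set sB : ℝ → ℝ := fun x => |f1 x| + |f2 x| + |f3 x| + |f4 x| with hsB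
  have hsBm : Measurable sB := ((hf1m.abs.add hf2m.abs).add hf3m.abs).add hf4m.abs
  have hsBnn : ∀ x, 0 ≤ sB x := by
    intro x; rw [hsB]; simp only
    have := abs_nonneg (f1 x); have := abs_nonneg (f2 x)
    have := abs_nonneg (f3 x); have := abs_nonneg (f4 x); linarith
  have crosspiece : ∀ n : ℕ,
      ∫ ω, (if sB (X ω) ≤ (n:ℝ) then (1:ℝ) else 0) * Z ω ∂P = 0 := by
    intro n
    set fn : Ω → ℝ := fun ω => if sB (X ω) ≤ (n:ℝ) then (1:ℝ) else 0 with hfn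
    have hfnsm : StronglyMeasurable[mX X] fn :=
      hcomp (Measurable.ite (measurableSet_le hsBm measurable_const)
        measurable_const measurable_const)
    have hb : ∀ (h' : ℝ → ℝ), (∀ x, |h' x| ≤ sB x) → ∀ ω, ‖fn ω * h' (X ω)‖ ≤ (n:ℝ) := by
      intro h' hle ω
      rw [Real.norm_eq_abs, abs_mul, hfn]
      by_cases hcnd : sB (X ω) ≤ (n:ℝ)
      · simp only [if_pos hcnd, abs_one, one_mul]
        exact le_trans (hle (X ω)) hcnd
      · simp only [if_neg hcnd, abs_zero, zero_mul]
        exact Nat.cast_nonneg n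
    have hle1 : ∀ x, |f1 x| ≤ sB x := by
      intro x; rw [hsB]; simp only
      have := abs_nonneg (f2 x); have := abs_nonneg (f3 x); have := abs_nonneg (f4 x); linarith
    have hle2 : ∀ x, |f2 x| ≤ sB x := by
      intro x; rw [hsB]; simp only
      have := abs_nonneg (f1 x); have := abs_nonneg (f3 x); have := abs_nonneg (f4 x); linarith
    have hle3 : ∀ x, |f3 x| ≤ sB x := by
      intro x; rw [hsB]; simp only
      have := abs_nonneg (f1 x); have := abs_nonneg (f2 x); have := abs_nonneg (f4 x); linarith
    have hle4 : ∀ x, |f4 x| ≤ sB x := by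
      intro x; rw [hsB]; simp only
      have := abs_nonneg (f1 x); have := abs_nonneg (f2 x); have := abs_nonneg (f3 x); linarith
    have hasm : ∀ {h' : ℝ → ℝ}, Measurable h' →
        AEStronglyMeasurable (fun ω => fn ω * h' (X ω)) P :=
      fun hh => ((hfnsm.mul (hcomp hh)).mono hm).aestronglyMeasurable
    have hint1 : Integrable (fun ω => fn ω * f1 (X ω) * (A ω * G ω * Y ω)) P :=
      hg1i.bdd_mul (hasm hf1m) (Filter.Eventually.of_forall (hb f1 hle1))
    have hint2 : Integrable (fun ω => fn ω * f2 (X ω) * (A ω * G ω)) P :=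
      hg2i.bdd_mul (hasm hf2m) (Filter.Eventually.of_forall (hb f2 hle2))
    have hint3 : Integrable (fun ω => fn ω * f3 (X ω) * ((1 - A ω) * G ω * Y ω)) P :=
      hg3i.bdd_mul (hasm hf3m) (Filter.Eventually.of_forall (hb f3 hle3))
    have hint4 : Integrable (fun ω => fn ω * f4 (X ω) * ((1 - A ω) * G ω)) P :=
      hg4i.bdd_mul (hasm hf4m) (Filter.Eventually.of_forall (hb f4 hle4))
    have H1 := helper_int_eq hm (hfnsm.mul (hcomp hf1m)) hint1 hg1i hμ1
    have H2 := helper_int_eq hm (hfnsm.mul (hcomp hf2m)) hint2 hg2i he1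
    have H3 := helper_int_eq hm (hfnsm.mul (hcomp hf3m)) hint3 hg3i hμ0
    have H4 := helper_int_eq hm (hfnsm.mul (hcomp hf4m)) hint4 hg4i hk4
    have e1' : ∫ ω, fn ω * f1 (X ω) * (A ω * G ω * Y ω) ∂P
        = ∫ ω, fn ω * f1 (X ω) * (μ1 (X ω) * e1 (X ω) * π (X ω)) ∂P := H1.2
    have e2' : ∫ ω, fn ω * f2 (X ω) * (A ω * G ω) ∂P
        = ∫ ω, fn ω * f2 (X ω) * (e1 (X ω) * π (X ω)) ∂P := H2.2
    have e3' : ∫ ω, fn ω * f3 (X ω) * ((1 - A ω) * G ω * Y ω) ∂P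
        = ∫ ω, fn ω * f3 (X ω) * (μ0 (X ω) * (1 - e1 (X ω)) * π (X ω)) ∂P := H3.2
    have e4' : ∫ ω, fn ω * f4 (X ω) * ((1 - A ω) * G ω) ∂P
        = ∫ ω, fn ω * f4 (X ω) * (π (X ω) - e1 (X ω) * π (X ω)) ∂P := H4.2
    have hq1int : Integrable (fun ω => fn ω * f1 (X ω) * (μ1 (X ω) * e1 (X ω) * π (X ω))) P := H1.1
    have hq2int : Integrable (fun ω => fn ω * f2 (X ω) * (e1 (X ω) * π (X ω))) P := H2.1
    have hq3int : Integrable (fun ω => fn ω * f3 (X ω) * (μ0 (X ω) * (1 - e1 (X ω)) * π (X ω))) P := H3.1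
    have hq4int : Integrable (fun ω => fn ω * f4 (X ω) * (π (X ω) - e1 (X ω) * π (X ω))) P := H4.1
    have hint34 : Integrable (fun ω => fn ω * f3 (X ω) * ((1 - A ω) * G ω * Y ω)
        + fn ω * f4 (X ω) * ((1 - A ω) * G ω)) P := hint3.add hint4
    have hint234 : Integrable (fun ω => fn ω * f2 (X ω) * (A ω * G ω)
        + (fn ω * f3 (X ω) * ((1 - A ω) * G ω * Y ω)
        + fn ω * f4 (X ω) * ((1 - A ω) * G ω))) P := hint2.add hint34
    have hq34 : Integrable (fun ω => fn ω * f3 (X ω) * (μ0 (X ω) * (1 - e1 (X ω)) * π (X ω))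
        + fn ω * f4 (X ω) * (π (X ω) - e1 (X ω) * π (X ω))) P := hq3int.add hq4int
    have hq234 : Integrable (fun ω => fn ω * f2 (X ω) * (e1 (X ω) * π (X ω))
        + (fn ω * f3 (X ω) * (μ0 (X ω) * (1 - e1 (X ω)) * π (X ω))
        + fn ω * f4 (X ω) * (π (X ω) - e1 (X ω) * π (X ω)))) P := hq2int.add hq34
    calc ∫ ω, fn ω * Z ω ∂P
        = ∫ ω, (fn ω * f1 (X ω) * (A ω * G ω * Y ω)
            + (fn ω * f2 (X ω) * (A ω * G ω)
            + (fn ω * f3 (X ω) * ((1 - A ω) * G ω * Y ω)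
            + fn ω * f4 (X ω) * ((1 - A ω) * G ω)))) ∂P := by
          refine integral_congr_ae (Filter.Eventually.of_forall fun ω => ?_)
          simp only [hZ]; ring
      _ = (∫ ω, fn ω * f1 (X ω) * (A ω * G ω * Y ω) ∂P)
            + ((∫ ω, fn ω * f2 (X ω) * (A ω * G ω) ∂P)
            + ((∫ ω, fn ω * f3 (X ω) * ((1 - A ω) * G ω * Y ω) ∂P)
            + (∫ ω, fn ω * f4 (X ω) * ((1 - A ω) * G ω) ∂P))) := by
          rw [integral_add hint1 hint234, integral_add hint2 hint34,
            integral_add hint3 hint4]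
      _ = (∫ ω, fn ω * f1 (X ω) * (μ1 (X ω) * e1 (X ω) * π (X ω)) ∂P)
            + ((∫ ω, fn ω * f2 (X ω) * (e1 (X ω) * π (X ω)) ∂P)
            + ((∫ ω, fn ω * f3 (X ω) * (μ0 (X ω) * (1 - e1 (X ω)) * π (X ω)) ∂P)
            + (∫ ω, fn ω * f4 (X ω) * (π (X ω) - e1 (X ω) * π (X ω)) ∂P))) := by
          rw [e1', e2', e3', e4']
      _ = ∫ ω, (fn ω * f1 (X ω) * (μ1 (X ω) * e1 (X ω) * π (X ω))
            + (fn ω * f2 (X ω) * (e1 (X ω) * π (X ω))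
            + (fn ω * f3 (X ω) * (μ0 (X ω) * (1 - e1 (X ω)) * π (X ω))
            + fn ω * f4 (X ω) * (π (X ω) - e1 (X ω) * π (X ω))))) ∂P := by
          rw [integral_add hq1int hq234, integral_add hq2int hq34,
            integral_add hq3int hq4int]
      _ = ∫ ω, (0:ℝ) ∂P := by
          refine integral_congr_ae (Filter.Eventually.of_forall fun ω => ?_)
          simp only [hf1, hf2, hf3, hf4]
          ring
      _ = 0 := integral_zero _ _
  have crossZ : ∫ ω, Z ω ∂P = 0 := by
    have hten : Filter.Tendsto
        (fun n : ℕ => ∫ ω, (if sB (X ω) ≤ (n:ℝ) then (1:ℝ) else 0) * Z ω ∂P)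
        Filter.atTop (nhds (∫ ω, Z ω ∂P)) := by
      refine tendsto_integral_of_dominated_convergence (fun ω => |Z ω|)
        (fun n => ?_) hZint.abs (fun n => Filter.Eventually.of_forall fun ω => ?_)
        (Filter.Eventually.of_forall fun ω => ?_)
      · exact ((Measurable.ite (measurableSet_le (hsBm.comp hX) measurable_const)
          measurable_const measurable_const).mul hZm).aestronglyMeasurable
      · rw [Real.norm_eq_abs, abs_mul]
        by_cases hcnd : sB (X ω) ≤ (n:ℝ)
        · simp [hcnd]
        · simp [hcnd, abs_nonneg]
      · refine Filter.Tendsto.congr' ?_ tendsto_const_nhds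
        filter_upwards [Filter.eventually_ge_atTop ⌈sB (X ω)⌉₊] with n hn
        have : sB (X ω) ≤ (n:ℝ) := le_trans (Nat.le_ceil _) (Nat.cast_le.mpr hn)
        rw [if_pos this, one_mul]
    have h0 : Filter.Tendsto
        (fun n : ℕ => ∫ ω, (if sB (X ω) ≤ (n:ℝ) then (1:ℝ) else 0) * Z ω ∂P)
        Filter.atTop (nhds 0) := by
      simp only [crosspiece]; exact tendsto_const_nhds
    exact tendsto_nhds_unique hten h0
  -- E[(1-G) h(X)] = E[(1-pi(X)) h(X)]
  have hbD : StronglyMeasurable[mX X] (fun ω => D (X ω) ^ 2 / (1 - q) / (1 - q)) :=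
    hcomp (((hDm.pow measurable_const).div measurable_const).div measurable_const)
  have h1G : Integrable (fun ω => 1 - G ω) P := (integrable_const 1).sub hGi
  have hbg : Integrable (fun ω => (D (X ω) ^ 2 / (1 - q) / (1 - q)) * (1 - G ω)) P :=
    hAint.congr (Filter.Eventually.of_forall fun ω => by ring)
  have HA := helper_int_eq hm hbD hbg h1G hk5
  have HA2 : ∫ ω, (D (X ω) ^ 2 / (1 - q) / (1 - q)) * (1 - G ω) ∂P
      = ∫ ω, (D (X ω) ^ 2 / (1 - q) / (1 - q)) * (1 - π (X ω)) ∂P := HA.2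
  have HA1 : Integrable (fun ω => (D (X ω) ^ 2 / (1 - q) / (1 - q)) * (1 - π (X ω))) P := HA.1
  have hABi : Integrable (fun ω => (1 - G ω) * D (X ω) ^ 2 / (1 - q) / (1 - q)
      - (1 - π (X ω)) ^ 2 * D (X ω) ^ 2 / (1 - q) / (1 - q)) P := hAint.sub hBint
  have h2Z : Integrable (fun ω => 2 * Z ω) P := hZint.const_mul 2
  have main : (∫ ω, φI ω ^ 2 ∂P) - (∫ ω, φK ω ^ 2 ∂P)
      = (∫ ω, (μ1 (X ω) - μ0 (X ω) - τ) ^ 2 * π (X ω) * (1 - π (X ω)) ∂P) / (1 - q) ^ 2 := by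
    calc (∫ ω, φI ω ^ 2 ∂P) - (∫ ω, φK ω ^ 2 ∂P)
        = ∫ ω, (φI ω ^ 2 - φK ω ^ 2) ∂P := (integral_sub hφIsq hφKsq).symm
      _ = ∫ ω, ((1 - G ω) * D (X ω) ^ 2 / (1 - q) / (1 - q)
            - (1 - π (X ω)) ^ 2 * D (X ω) ^ 2 / (1 - q) / (1 - q) - 2 * Z ω) ∂P :=
          integral_congr_ae (Filter.Eventually.of_forall key)
      _ = (∫ ω, ((1 - G ω) * D (X ω) ^ 2 / (1 - q) / (1 - q)
            - (1 - π (X ω)) ^ 2 * D (X ω) ^ 2 / (1 - q) / (1 - q)) ∂P)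
            - ∫ ω, 2 * Z ω ∂P := integral_sub hABi h2Z
      _ = (∫ ω, (1 - G ω) * D (X ω) ^ 2 / (1 - q) / (1 - q) ∂P)
            - (∫ ω, (1 - π (X ω)) ^ 2 * D (X ω) ^ 2 / (1 - q) / (1 - q) ∂P) := by
          rw [integral_sub hAint hBint, integral_const_mul, crossZ, mul_zero, sub_zero]
      _ = (∫ ω, (D (X ω) ^ 2 / (1 - q) / (1 - q)) * (1 - π (X ω)) ∂P)
            - (∫ ω, (1 - π (X ω)) ^ 2 * D (X ω) ^ 2 / (1 - q) / (1 - q) ∂P) := by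
          rw [(integral_congr_ae (Filter.Eventually.of_forall
            (fun ω => by ring : ∀ ω, (1 - G ω) * D (X ω) ^ 2 / (1 - q) / (1 - q)
              = (D (X ω) ^ 2 / (1 - q) / (1 - q)) * (1 - G ω))) : _), HA2]
      _ = ∫ ω, ((D (X ω) ^ 2 / (1 - q) / (1 - q)) * (1 - π (X ω))
            - (1 - π (X ω)) ^ 2 * D (X ω) ^ 2 / (1 - q) / (1 - q)) ∂P :=
          (integral_sub HA1 hBint).symm
      _ = ∫ ω, (D (X ω) ^ 2 * π (X ω) * (1 - π (X ω))) / (1 - q) / (1 - q) ∂P :=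
          integral_congr_ae (Filter.Eventually.of_forall fun ω => by ring)
      _ = (∫ ω, D (X ω) ^ 2 * π (X ω) * (1 - π (X ω)) ∂P) / (1 - q) / (1 - q) := by
          rw [integral_div, integral_div]
      _ = (∫ ω, (μ1 (X ω) - μ0 (X ω) - τ) ^ 2 * π (X ω) * (1 - π (X ω)) ∂P) / (1 - q) ^ 2 := by
          rw [div_div, ← sq]
  have hnn : 0 ≤ᵐ[P] fun ω => (μ1 (X ω) - μ0 (X ω) - τ) ^ 2 * π (X ω) * (1 - π (X ω)) := by
    filter_upwards [hposπ] with ω h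
    have h1 := sq_nonneg (μ1 (X ω) - μ0 (X ω) - τ)
    have h2 : (0:ℝ) ≤ 1 - π (X ω) := by linarith [h.2]
    exact mul_nonneg (mul_nonneg h1 h.1.le) h2
  have hne : ((1:ℝ) - q) ^ 2 ≠ 0 := pow_ne_zero _ hq'
  refine ⟨main, div_nonneg (integral_nonneg_of_ae hnn) (by positivity), ?_⟩
  rw [div_eq_zero_iff]
  constructor
  · rintro (h0 | h0)
    · have hz0 := (integral_eq_zero_iff_of_nonneg_ae hnn hgain).mp h0
      filter_upwards [hz0, hposπ] with ω hz hp
      simp only [Pi.zero_apply] at hz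
      have hππ : 0 < π (X ω) * (1 - π (X ω)) := mul_pos hp.1 (by linarith [hp.2])
      rw [mul_assoc] at hz
      rcases mul_eq_zero.mp hz with h3 | h3
      · have h4 : μ1 (X ω) - μ0 (X ω) - τ = 0 := by
          have := sq_eq_zero_iff.mp h3
          exact this
        linarith
      · exact absurd h3 (ne_of_gt hππ)
    · exact absurd h0 hne
  · intro h
    left
    rw [integral_eq_zero_iff_of_nonneg_ae hnn hgain]
    filter_upwards [h] with ω hω
    simp only [Pi.zero_apply]
    have h4 : μ1 (X ω) - μ0 (X ω) - τ = 0 := by linarith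
    rw [h4]
    ring
end

section
/- Under the posterior drift assumption, τ = E[ ψ1(μ1(X)) − ψ0(μ0(X)) | G=0 ], where ψ0, ψ1 are the known drift functions satisfying E[Y(0)|X,G=0] = ψ0(μ0(X)) and E[Y(1)|X,G=0] = ψ1(μ1(X)) with μa(X) = E[Y(a)|X,G=1]. -/
open MeasureTheory ProbabilityTheory

theorem posterior_drift_identification
    {Ω : Type*} [MeasurableSpace Ω] (P : Measure Ω) [IsProbabilityMeasure P]
    (X G Y0 Y1 : Ω → ℝ)
    (hX : Measurable X) (hG : Measurable G)
    (hY0m : Measurable Y0) (hY1m : Measurable Y1)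
    (hY0 : Integrable Y0 P) (hY1 : Integrable Y1 P)
    (hGbin : ∀ ω, G ω = 0 ∨ G ω = 1)
    (π μ0 μ1 ψ0 ψ1 : ℝ → ℝ)
    (hπm : Measurable π) (hμ0m : Measurable μ0) (hμ1m : Measurable μ1)
    (hψ0m : Measurable ψ0) (hψ1m : Measurable ψ1)
    (hπ : (fun ω => π (X ω)) =ᵐ[P] P[G | mX X])
    (hposπ : ∀ᵐ ω ∂P, 0 < π (X ω) ∧ π (X ω) < 1)
    (hsrc1 : (fun ω => μ1 (X ω) * π (X ω)) =ᵐ[P] P[fun ω => G ω * Y1 ω | mX X])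
    (hsrc0 : (fun ω => μ0 (X ω) * π (X ω)) =ᵐ[P] P[fun ω => G ω * Y0 ω | mX X])
    (hdrift1 : (fun ω => ψ1 (μ1 (X ω)) * (1 - π (X ω))) =ᵐ[P]
      P[fun ω => (1 - G ω) * Y1 ω | mX X])
    (hdrift0 : (fun ω => ψ0 (μ0 (X ω)) * (1 - π (X ω))) =ᵐ[P]
      P[fun ω => (1 - G ω) * Y0 ω | mX X])
    (hint1 : Integrable (fun ω => ψ1 (μ1 (X ω))) P)
    (hint0 : Integrable (fun ω => ψ0 (μ0 (X ω))) P) :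
    ∫ ω, (1 - G ω) * (Y1 ω - Y0 ω) ∂P
      = ∫ ω, (1 - G ω) * (ψ1 (μ1 (X ω)) - ψ0 (μ0 (X ω))) ∂P := by

  have hm : mX X ≤ ‹MeasurableSpace Ω› := hX.comap_le
  have hOneG_bd : ∀ ω, ‖1 - G ω‖ ≤ 1 := by
    intro ω; rcases hGbin ω with h | h <;> simp [h]
  have hG_bd : ∀ ω, ‖G ω‖ ≤ 1 := by
    intro ω; rcases hGbin ω with h | h <;> simp [h]
  have hOneGm : Measurable (fun ω => 1 - G ω) := measurable_const.sub hG
  have hmul_int : ∀ (f : Ω → ℝ), Integrable f P → Integrable (fun ω => (1 - G ω) * f ω) P := by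
    intro f hf
    exact hf.bdd_mul hOneGm.aestronglyMeasurable (Filter.Eventually.of_forall hOneG_bd)
  have hG_int : Integrable G P := by
    have := (integrable_const (1:ℝ) (μ := P)).bdd_mul (c := 1) hG.aestronglyMeasurable
      (Filter.Eventually.of_forall hG_bd)
    simpa using this
  -- conditional expectation of 1 - G
  have hcondOneG : P[fun ω => 1 - G ω | mX X] =ᵐ[P] fun ω => 1 - π (X ω) := by
    have h1 : P[fun ω => 1 - G ω | mX X]
        =ᵐ[P] P[fun _ => (1:ℝ) | mX X] - P[G | mX X] := by
      have := condExp_sub (m := mX X) (integrable_const (1:ℝ) (μ := P)) hG_int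
      exact this
    refine h1.trans ?_
    have h2 : P[fun _ => (1:ℝ) | mX X] = fun _ => (1:ℝ) := condExp_const hm 1
    filter_upwards [hπ] with ω hω
    simp [Pi.sub_apply, h2, ← hω]
  -- key lemma: for f(X) measurable and Y integrable with the drift condexp equation
  have key : ∀ (ψ μa : ℝ → ℝ) (Y : Ω → ℝ), Measurable ψ → Measurable μa →
      Integrable Y P → Integrable (fun ω => ψ (μa (X ω))) P →
      ((fun ω => ψ (μa (X ω)) * (1 - π (X ω))) =ᵐ[P]
        P[fun ω => (1 - G ω) * Y ω | mX X]) →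
      ∫ ω, (1 - G ω) * Y ω ∂P = ∫ ω, (1 - G ω) * ψ (μa (X ω)) ∂P := by
    intro ψ μa Y hψ hμa hY hψint hdrift
    have hfm : StronglyMeasurable[mX X] (fun ω => ψ (μa (X ω))) := by
      refine Measurable.stronglyMeasurable ?_
      exact (hψ.comp hμa).comp (Measurable.of_comap_le le_rfl)
    have hfg_int : Integrable (fun ω => ψ (μa (X ω)) * (1 - G ω)) P := by
      have := hmul_int _ hψint
      exact this.congr (by filter_upwards with ω; ring)
    have hOneG_int : Integrable (fun ω => 1 - G ω) P := hmul_int _ (integrable_const 1)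
      |>.congr (by filter_upwards with ω; ring)
    have hpull : P[(fun ω => ψ (μa (X ω))) * (fun ω => 1 - G ω) | mX X]
        =ᵐ[P] (fun ω => ψ (μa (X ω))) * P[fun ω => 1 - G ω | mX X] :=
      condExp_mul_of_stronglyMeasurable_left hfm (by simpa [Pi.mul_def] using hfg_int) hOneG_int
    have h1 : ∫ ω, (1 - G ω) * Y ω ∂P = ∫ ω, ψ (μa (X ω)) * (1 - π (X ω)) ∂P := by
      rw [← integral_condExp (μ := P) hm (f := fun ω => (1 - G ω) * Y ω)]
      exact (integral_congr_ae hdrift).symm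
    have h2 : ∫ ω, (1 - G ω) * ψ (μa (X ω)) ∂P
        = ∫ ω, ψ (μa (X ω)) * (1 - π (X ω)) ∂P := by
      have e1 : ∫ ω, (1 - G ω) * ψ (μa (X ω)) ∂P
          = ∫ ω, ((fun ω => ψ (μa (X ω))) * (fun ω => 1 - G ω)) ω ∂P := by
        refine integral_congr_ae ?_
        filter_upwards with ω; simp [mul_comm]
      rw [e1, ← integral_condExp (μ := P) hm (f := (fun ω => ψ (μa (X ω))) * (fun ω => 1 - G ω))]
      refine integral_congr_ae ?_
      filter_upwards [hpull, hcondOneG] with ω h1 h2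
      simp only [h1, Pi.mul_apply, h2]
    rw [h1, h2]
  have k1 := key ψ1 μ1 Y1 hψ1m hμ1m hY1 hint1 hdrift1
  have k0 := key ψ0 μ0 Y0 hψ0m hμ0m hY0 hint0 hdrift0
  have lhs : ∫ ω, (1 - G ω) * (Y1 ω - Y0 ω) ∂P
      = ∫ ω, (1 - G ω) * Y1 ω ∂P - ∫ ω, (1 - G ω) * Y0 ω ∂P := by
    rw [← integral_sub (hmul_int _ hY1) (hmul_int _ hY0)]
    refine integral_congr_ae ?_
    filter_upwards with ω; ring
  have rhs : ∫ ω, (1 - G ω) * (ψ1 (μ1 (X ω)) - ψ0 (μ0 (X ω))) ∂P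
      = ∫ ω, (1 - G ω) * ψ1 (μ1 (X ω)) ∂P - ∫ ω, (1 - G ω) * ψ0 (μ0 (X ω)) ∂P := by
    rw [← integral_sub (hmul_int _ hint1) (hmul_int _ hint0)]
    refine integral_congr_ae ?_
    filter_upwards with ω; ring
  rw [lhs, rhs, k1, k0]
end
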